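/- arXiv:2211.04820 — 3 statements merged into one kernel-verified Lean document; each statement's English description precedes it below -/
import Mathlib

section
/- Let P be a polyomino that is not a square and let 𝔸 be a super partition of P. Then every maximal cell interval J ∈ 𝒞(P) with J ∉ 𝔸 is embedded. -/
/-- A cell of the grid, identified with its lower-left corner. -/
abbrev Cell : Type := ℤ × ℤ

/-- Two cells are adjacent if they differ by `(±1,0)` or `(0,±1)`. -/
def Adjacent (c d : Cell) : Prop :=
  (c.1 = d.1 ∧ (c.2 = d.2 + 1 ∨ d.2 = c.2 + 1)) ∨
  (c.2 = d.2 ∧ (c.1 = d.1 + 1 ∨ d.1 = c.1 + 1))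

/-- A polyomino: a finite nonempty set of cells, any two of which are joined by a
path of adjacent cells inside the set. -/
def IsPolyomino (P : Finset Cell) : Prop :=
  P.Nonempty ∧ ∀ c ∈ P, ∀ d ∈ P,
    Relation.ReflTransGen (fun a b => Adjacent a b ∧ a ∈ P ∧ b ∈ P) c d

/-- A horizontal segment of consecutive cells in a row. -/
def IsHSeg (S : Finset Cell) : Prop :=
  ∃ y a b : ℤ, a ≤ b ∧ S = (Finset.Icc a b).image (fun x => (x, y))

/-- A vertical segment of consecutive cells in a column. -/
def IsVSeg (S : Finset Cell) : Prop :=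
  ∃ x a b : ℤ, a ≤ b ∧ S = (Finset.Icc a b).image (fun y => (x, y))

/-- A maximal horizontal cell interval of `P`. -/
def IsMaxHInterval (P I : Finset Cell) : Prop :=
  IsHSeg I ∧ I ⊆ P ∧ ∀ I', IsHSeg I' → I' ⊆ P → I ⊆ I' → I' = I

/-- A maximal vertical cell interval of `P`. -/
def IsMaxVInterval (P I : Finset Cell) : Prop :=
  IsVSeg I ∧ I ⊆ P ∧ ∀ I', IsVSeg I' → I' ⊆ P → I ⊆ I' → I' = I

/-- A maximal cell interval of `P`. -/
def IsMaxInterval (P I : Finset Cell) : Prop :=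
  IsMaxHInterval P I ∨ IsMaxVInterval P I

/-- Two distinct cells of `P` attack each other if they lie in a common maximal
cell interval of `P`. -/
def Attacks (P : Finset Cell) (c d : Cell) : Prop :=
  c ≠ d ∧ ∃ I, IsMaxInterval P I ∧ c ∈ I ∧ d ∈ I

/-- A set of pairwise non-attacking cells of `P` (a face of the rook complex). -/
def IsRookSet (P F : Finset Cell) : Prop :=
  F ⊆ P ∧ ∀ c ∈ F, ∀ d ∈ F, ¬ Attacks P c d

/-- A maximal set of pairwise non-attacking cells of `P` (a facet of the rook complex). -/
def IsMaxRookSet (P F : Finset Cell) : Prop :=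
  IsRookSet P F ∧ ∀ G, IsRookSet P G → F ⊆ G → G = F

/-- An interval `I` is embedded if some set `F` of pairwise non-attacking cells,
disjoint from `I`, attacks every cell of `I`. -/
def IsEmbedded (P I : Finset Cell) : Prop :=
  ∃ F : Finset Cell, IsRookSet P F ∧ F ∩ I = ∅ ∧ ∀ c ∈ I, ∃ f ∈ F, Attacks P f c

/-- A partition of `P`: pairwise disjoint maximal cell intervals whose union is `P`. -/
def IsPartition (P : Finset Cell) (A : Finset (Finset Cell)) : Prop :=
  (∀ I ∈ A, IsMaxInterval P I) ∧
  (∀ I ∈ A, ∀ J ∈ A, I ≠ J → Disjoint I J) ∧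
  A.biUnion id = P

/-- A super partition: a partition none of whose intervals is embedded. -/
def IsSuperPartition (P : Finset Cell) (A : Finset (Finset Cell)) : Prop :=
  IsPartition P A ∧ ∀ I ∈ A, ¬ IsEmbedded P I

/-- `P` is a square: a translate of the `n × n` block of cells for some `n ≥ 1`. -/
def IsSquareBlock (P : Finset Cell) : Prop :=
  ∃ a b n : ℤ, 1 ≤ n ∧ P = Finset.Icc a (a + n - 1) ×ˢ Finset.Icc b (b + n - 1)

/-- The graph `G_P` on the cells of `P` whose edges are the attacking pairs. -/
def GP (P : Finset Cell) : SimpleGraph {c : Cell // c ∈ P} where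
  Adj c d := Attacks P (c : Cell) (d : Cell)
  symm := by
    constructor
    rintro c d ⟨hne, I, hI, hc, hd⟩
    exact ⟨hne.symm, I, hI, hd, hc⟩
  loopless := by
    constructor
    rintro c ⟨hne, -⟩
    exact hne rfl

/-- The complement graph `Ḡ_P`. -/
def GBar (P : Finset Cell) : SimpleGraph {c : Cell // c ∈ P} := (GP P)ᶜ

/-- `G` has an induced cycle of length `n`: an injective map from `ZMod n`
whose image induces exactly the cycle adjacencies. -/
def HasInducedCycle {V : Type*} (G : SimpleGraph V) (n : ℕ) : Prop :=
  3 ≤ n ∧ ∃ f : ZMod n → V, Function.Injective f ∧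
    ∀ i j : ZMod n, G.Adj (f i) (f j) ↔ (i = j + 1 ∨ j = i + 1)

/-- A graph is chordal if it has no induced cycle of length at least 4. -/
def IsChordal {V : Type*} (G : SimpleGraph V) : Prop :=
  ∀ n, 4 ≤ n → ¬ HasInducedCycle G n

/-- `P` is simple: any two cells outside `P` are joined by a path of adjacent
cells outside `P`. -/
def IsSimple (P : Finset Cell) : Prop :=
  ∀ c d : Cell, c ∉ P → d ∉ P →
    Relation.ReflTransGen (fun a b => Adjacent a b ∧ a ∉ P ∧ b ∉ P) c d

/-- `P` is thin: it contains no four cells forming a `2 × 2` square. -/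
def IsThin (P : Finset Cell) : Prop :=
  ¬ ∃ a : Cell, ({a, (a.1 + 1, a.2), (a.1, a.2 + 1), (a.1 + 1, a.2 + 1)} : Finset Cell) ⊆ P

/-- A path of distinct cells of `P`, consecutive cells being adjacent. -/
def IsCellPath (P : Finset Cell) (l : List Cell) : Prop :=
  l.Nodup ∧ (∀ c ∈ l, c ∈ P) ∧ l.Chain' Adjacent

/-- The number of changes of direction of a path of cells: positions `k`
(with `1 ≤ k ≤ length - 2`) where the `(k-1)`-st and `(k+1)`-st cells differ
in both coordinates. -/
def dirChanges (l : List Cell) : ℕ :=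
  ((Finset.Ico 1 (l.length - 1)).filter (fun k =>
    (l.getD (k - 1) (0, 0)).1 ≠ (l.getD (k + 1) (0, 0)).1 ∧
    (l.getD (k - 1) (0, 0)).2 ≠ (l.getD (k + 1) (0, 0)).2)).card

/-- The eight rotations/reflections of the grid. -/
def dihedralMaps : List (Cell → Cell) :=
  [fun p => (p.1, p.2), fun p => (-p.2, p.1), fun p => (-p.1, -p.2), fun p => (p.2, -p.1),
   fun p => (p.2, p.1), fun p => (-p.1, p.2), fun p => (-p.2, -p.1), fun p => (p.1, -p.2)]

/-- `P` is obtained from `Q` by a translation, rotation or reflection of `ℤ²`. -/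
def CongruentTo (P Q : Finset Cell) : Prop :=
  ∃ g ∈ dihedralMaps, ∃ t : Cell, P = Q.image (fun p => g p + t)

/-- A brush polyomino with handle `J`. -/
def IsBrush (P J : Finset Cell) : Prop :=
  IsPolyomino P ∧ IsSimple P ∧ IsThin P ∧ IsMaxInterval P J ∧
  (∀ I, IsMaxInterval P I → 2 ≤ I.card → I ≠ J → (I ∩ J).Nonempty) ∧
  (∀ c ∈ P, c ∈ J ∨ ∃ I, IsMaxInterval P I ∧ 2 ≤ I.card ∧ c ∈ I)

/-- A short brush polyomino: a brush all of whose bristles have at most two cells. -/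
def IsShortBrush (P : Finset Cell) : Prop :=
  ∃ J, IsBrush P J ∧ ∀ I, IsMaxInterval P I → I ≠ J → I.card ≤ 2

/-- A pure brush polyomino: handle `J` of cardinality `d` together with `d`
pairwise disjoint bristles `I 0, …, I (d-1)` perpendicular to `J`, each meeting
`J`, whose union is `P`. -/
def IsPureBrush (P J : Finset Cell) (d : ℕ) (I : Fin d → Finset Cell) : Prop :=
  IsPolyomino P ∧ IsSimple P ∧ IsThin P ∧
  J.card = d ∧
  ((IsMaxHInterval P J ∧ ∀ k, IsMaxVInterval P (I k)) ∨
   (IsMaxVInterval P J ∧ ∀ k, IsMaxHInterval P (I k))) ∧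
  (∀ j k, j ≠ k → Disjoint (I j) (I k)) ∧
  (∀ k, ((I k) ∩ J).Nonempty) ∧
  Finset.univ.biUnion I = P

/-- The `k`-th elementary symmetric polynomial of `x 0, …, x (d-1)`. -/
def esymm {R : Type*} [CommRing R] {d : ℕ} (k : ℕ) (x : Fin d → R) : R :=
  ∑ s ∈ Finset.powersetCard k (Finset.univ : Finset (Fin d)), ∏ i ∈ s, x i

/-- `G_P` has an induced matching with `n` edges `{A i, B i}`. -/
def HasInducedMatching (P : Finset Cell) (n : ℕ) : Prop :=
  ∃ A B : Fin n → Cell,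
    (∀ i, Attacks P (A i) (B i)) ∧
    (∀ i j, i ≠ j → A i ≠ A j) ∧
    (∀ i j, i ≠ j → B i ≠ B j) ∧
    (∀ i j, A i ≠ B j) ∧
    (∀ i j, i ≠ j →
      ¬ Attacks P (A i) (A j) ∧ ¬ Attacks P (A i) (B j) ∧ ¬ Attacks P (B i) (B j))

/-- The induced matching number `ν(G_P)`. -/
noncomputable def matchNum (P : Finset Cell) : ℕ := sSup {n | HasInducedMatching P n}

/-- `c` is a single cell of the maximal interval `I`: the maximal interval of `P`
through `c` perpendicular to `I` is `{c}`. -/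
def IsSingleCell (P I : Finset Cell) (c : Cell) : Prop :=
  c ∈ I ∧
  ((IsMaxHInterval P I ∧ ∀ I', IsMaxVInterval P I' → c ∈ I' → I' = {c}) ∨
   (IsMaxVInterval P I ∧ ∀ I', IsMaxHInterval P I' → c ∈ I' → I' = {c}))

-- ### Block A : basics on segments and maximal intervals

lemma mem_hseg {a b y : ℤ} {d : Cell} :
    d ∈ (Finset.Icc a b).image (fun x => (x, y)) ↔ a ≤ d.1 ∧ d.1 ≤ b ∧ d.2 = y := by
  constructor
  · intro h
    simp only [Finset.mem_image, Finset.mem_Icc] at h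
    obtain ⟨x, ⟨h1, h2⟩, rfl⟩ := h
    exact ⟨h1, h2, rfl⟩
  · rintro ⟨h1, h2, h3⟩
    simp only [Finset.mem_image, Finset.mem_Icc]
    exact ⟨d.1, ⟨h1, h2⟩, Prod.ext rfl h3.symm⟩

lemma mem_vseg {a b x : ℤ} {d : Cell} :
    d ∈ (Finset.Icc a b).image (fun y => (x, y)) ↔ a ≤ d.2 ∧ d.2 ≤ b ∧ d.1 = x := by
  constructor
  · intro h
    simp only [Finset.mem_image, Finset.mem_Icc] at h
    obtain ⟨u, ⟨h1, h2⟩, rfl⟩ := h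
    exact ⟨h1, h2, rfl⟩
  · rintro ⟨h1, h2, h3⟩
    simp only [Finset.mem_image, Finset.mem_Icc]
    exact ⟨d.2, ⟨h1, h2⟩, Prod.ext h3.symm rfl⟩

lemma IsHSeg.snd_eq {S : Finset Cell} (h : IsHSeg S) {c d : Cell} (hc : c ∈ S) (hd : d ∈ S) :
    c.2 = d.2 := by
  obtain ⟨y, a, b, -, rfl⟩ := h
  rw [mem_hseg] at hc hd
  rw [hc.2.2, hd.2.2]

lemma IsVSeg.fst_eq {S : Finset Cell} (h : IsVSeg S) {c d : Cell} (hc : c ∈ S) (hd : d ∈ S) :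
    c.1 = d.1 := by
  obtain ⟨x, a, b, -, rfl⟩ := h
  rw [mem_vseg] at hc hd
  rw [hc.2.2, hd.2.2]

lemma IsHSeg.nonempty {S : Finset Cell} (h : IsHSeg S) : S.Nonempty := by
  obtain ⟨y, a, b, hab, rfl⟩ := h
  exact ⟨(a, y), mem_hseg.mpr ⟨le_refl _, hab, rfl⟩⟩

lemma IsVSeg.nonempty {S : Finset Cell} (h : IsVSeg S) : S.Nonempty := by
  obtain ⟨x, a, b, hab, rfl⟩ := h
  exact ⟨(x, a), mem_vseg.mpr ⟨le_refl _, hab, rfl⟩⟩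

lemma singleton_hseg (c : Cell) : IsHSeg {c} := by
  refine ⟨c.2, c.1, c.1, le_refl _, ?_⟩
  ext d
  rw [Finset.mem_singleton, mem_hseg]
  constructor
  · rintro rfl; exact ⟨le_refl _, le_refl _, rfl⟩
  · rintro ⟨h1, h2, h3⟩; exact Prod.ext (le_antisymm h2 h1) h3

lemma singleton_vseg (c : Cell) : IsVSeg {c} := by
  refine ⟨c.1, c.2, c.2, le_refl _, ?_⟩
  ext d
  rw [Finset.mem_singleton, mem_vseg]
  constructor
  · rintro rfl; exact ⟨le_refl _, le_refl _, rfl⟩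
  · rintro ⟨h1, h2, h3⟩; exact Prod.ext h3 (le_antisymm h2 h1)

lemma hseg_union {S T : Finset Cell} (hS : IsHSeg S) (hT : IsHSeg T) {c : Cell}
    (hcS : c ∈ S) (hcT : c ∈ T) : IsHSeg (S ∪ T) := by
  obtain ⟨y, a, b, hab, rfl⟩ := hS
  obtain ⟨y', a', b', hab', rfl⟩ := hT
  rw [mem_hseg] at hcS hcT
  have hy : y' = y := by rw [← hcT.2.2, hcS.2.2]
  subst hy
  refine ⟨y', min a a', max b b', by omega, ?_⟩
  ext d
  simp only [Finset.mem_union, mem_hseg]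
  constructor
  · intro h
    rcases h with ⟨h1, h2, h3⟩ | ⟨h1, h2, h3⟩ <;> exact ⟨by omega, by omega, h3⟩
  · rintro ⟨h1, h2, h3⟩
    have := hcS.1; have := hcS.2.1; have := hcT.1; have := hcT.2.1
    by_cases hd : d.1 ≤ b
    · by_cases hd2 : a ≤ d.1
      · exact Or.inl ⟨hd2, hd, h3⟩
      · exact Or.inr ⟨by omega, by omega, h3⟩
    · exact Or.inr ⟨by omega, by omega, h3⟩

lemma vseg_union {S T : Finset Cell} (hS : IsVSeg S) (hT : IsVSeg T) {c : Cell}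
    (hcS : c ∈ S) (hcT : c ∈ T) : IsVSeg (S ∪ T) := by
  obtain ⟨x, a, b, hab, rfl⟩ := hS
  obtain ⟨x', a', b', hab', rfl⟩ := hT
  rw [mem_vseg] at hcS hcT
  have hx : x' = x := by rw [← hcT.2.2, hcS.2.2]
  subst hx
  refine ⟨x', min a a', max b b', by omega, ?_⟩
  ext d
  simp only [Finset.mem_union, mem_vseg]
  constructor
  · intro h
    rcases h with ⟨h1, h2, h3⟩ | ⟨h1, h2, h3⟩ <;> exact ⟨by omega, by omega, h3⟩
  · rintro ⟨h1, h2, h3⟩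
    have := hcS.1; have := hcS.2.1; have := hcT.1; have := hcT.2.1
    by_cases hd : d.2 ≤ b
    · by_cases hd2 : a ≤ d.2
      · exact Or.inl ⟨hd2, hd, h3⟩
      · exact Or.inr ⟨by omega, by omega, h3⟩
    · exact Or.inr ⟨by omega, by omega, h3⟩

lemma exists_maxH {P : Finset Cell} {c : Cell} (hc : c ∈ P) :
    ∃ I, IsMaxHInterval P I ∧ c ∈ I := by
  classical
  have hne : ({c} : Finset Cell) ∈ P.powerset.filter (fun I => IsHSeg I ∧ c ∈ I) := by
    simp only [Finset.mem_filter, Finset.mem_powerset]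
    exact ⟨Finset.singleton_subset_iff.mpr hc, singleton_hseg c, Finset.mem_singleton_self c⟩
  obtain ⟨I₀, hmem, hmax⟩ :=
    (P.powerset.filter (fun I => IsHSeg I ∧ c ∈ I)).exists_max_image Finset.card ⟨{c}, hne⟩
  simp only [Finset.mem_filter, Finset.mem_powerset] at hmem
  obtain ⟨hsub, hseg, hcI⟩ := hmem
  refine ⟨I₀, ⟨hseg, hsub, ?_⟩, hcI⟩
  intro I' h1 h2 h3
  have hmemI' : I' ∈ P.powerset.filter (fun I => IsHSeg I ∧ c ∈ I) := by
    simp only [Finset.mem_filter, Finset.mem_powerset]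
    exact ⟨h2, h1, h3 hcI⟩
  exact (Finset.eq_of_subset_of_card_le h3 (hmax I' hmemI')).symm

lemma exists_maxV {P : Finset Cell} {c : Cell} (hc : c ∈ P) :
    ∃ I, IsMaxVInterval P I ∧ c ∈ I := by
  classical
  have hne : ({c} : Finset Cell) ∈ P.powerset.filter (fun I => IsVSeg I ∧ c ∈ I) := by
    simp only [Finset.mem_filter, Finset.mem_powerset]
    exact ⟨Finset.singleton_subset_iff.mpr hc, singleton_vseg c, Finset.mem_singleton_self c⟩
  obtain ⟨I₀, hmem, hmax⟩ :=
    (P.powerset.filter (fun I => IsVSeg I ∧ c ∈ I)).exists_max_image Finset.card ⟨{c}, hne⟩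
  simp only [Finset.mem_filter, Finset.mem_powerset] at hmem
  obtain ⟨hsub, hseg, hcI⟩ := hmem
  refine ⟨I₀, ⟨hseg, hsub, ?_⟩, hcI⟩
  intro I' h1 h2 h3
  have hmemI' : I' ∈ P.powerset.filter (fun I => IsVSeg I ∧ c ∈ I) := by
    simp only [Finset.mem_filter, Finset.mem_powerset]
    exact ⟨h2, h1, h3 hcI⟩
  exact (Finset.eq_of_subset_of_card_le h3 (hmax I' hmemI')).symm

lemma maxH_unique {P I I' : Finset Cell} (h : IsMaxHInterval P I) (h' : IsMaxHInterval P I')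
    {c : Cell} (hc : c ∈ I) (hc' : c ∈ I') : I = I' := by
  have hu : IsHSeg (I ∪ I') := hseg_union h.1 h'.1 hc hc'
  have h1 := h.2.2 (I ∪ I') hu (Finset.union_subset h.2.1 h'.2.1) Finset.subset_union_left
  have h2 := h'.2.2 (I ∪ I') hu (Finset.union_subset h.2.1 h'.2.1) Finset.subset_union_right
  exact h1.symm.trans h2

lemma maxV_unique {P I I' : Finset Cell} (h : IsMaxVInterval P I) (h' : IsMaxVInterval P I')
    {c : Cell} (hc : c ∈ I) (hc' : c ∈ I') : I = I' := by
  have hu : IsVSeg (I ∪ I') := vseg_union h.1 h'.1 hc hc'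
  have h1 := h.2.2 (I ∪ I') hu (Finset.union_subset h.2.1 h'.2.1) Finset.subset_union_left
  have h2 := h'.2.2 (I ∪ I') hu (Finset.union_subset h.2.1 h'.2.1) Finset.subset_union_right
  exact h1.symm.trans h2

lemma maxH_maxV_inter {P X Y : Finset Cell} (hX : IsMaxHInterval P X) (hY : IsMaxVInterval P Y)
    {c d : Cell} (hcX : c ∈ X) (hcY : c ∈ Y) (hdX : d ∈ X) (hdY : d ∈ Y) : c = d :=
  Prod.ext (hY.1.fst_eq hcY hdY) (hX.1.snd_eq hcX hdX)

lemma max_inter_subsingleton {P X Y : Finset Cell} (hX : IsMaxInterval P X)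
    (hY : IsMaxInterval P Y) (hne : X ≠ Y) {c d : Cell}
    (hcX : c ∈ X) (hcY : c ∈ Y) (hdX : d ∈ X) (hdY : d ∈ Y) : c = d := by
  rcases hX with hX | hX <;> rcases hY with hY | hY
  · exact absurd (maxH_unique hX hY hcX hcY) hne
  · exact maxH_maxV_inter hX hY hcX hcY hdX hdY
  · exact maxH_maxV_inter hY hX hcY hcX hdY hdX
  · exact absurd (maxV_unique hX hY hcX hcY) hne

lemma maxInterval_subset {P X : Finset Cell} (hX : IsMaxInterval P X) : X ⊆ P := by
  rcases hX with hX | hX <;> exact hX.2.1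

lemma maxInterval_nonempty {P X : Finset Cell} (hX : IsMaxInterval P X) : X.Nonempty := by
  rcases hX with hX | hX
  · exact hX.1.nonempty
  · exact hX.1.nonempty

-- ### Block B : the canonical intervals through a cell

open scoped Classical

noncomputable def Hc (P : Finset Cell) (c : Cell) : Finset Cell :=
  if h : ∃ I, IsMaxHInterval P I ∧ c ∈ I then h.choose else {c}

noncomputable def Vc (P : Finset Cell) (c : Cell) : Finset Cell :=
  if h : ∃ I, IsMaxVInterval P I ∧ c ∈ I then h.choose else {c}

lemma Hc_spec {P : Finset Cell} {c : Cell} (hc : c ∈ P) :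
    IsMaxHInterval P (Hc P c) ∧ c ∈ Hc P c := by
  rw [Hc, dif_pos (exists_maxH hc)]
  exact (exists_maxH hc).choose_spec

lemma Vc_spec {P : Finset Cell} {c : Cell} (hc : c ∈ P) :
    IsMaxVInterval P (Vc P c) ∧ c ∈ Vc P c := by
  rw [Vc, dif_pos (exists_maxV hc)]
  exact (exists_maxV hc).choose_spec

lemma maxH_eq_Hc {P X : Finset Cell} {c : Cell} (hX : IsMaxHInterval P X) (hc : c ∈ X) :
    X = Hc P c := by
  have hcP : c ∈ P := hX.2.1 hc
  exact maxH_unique hX (Hc_spec hcP).1 hc (Hc_spec hcP).2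

lemma maxV_eq_Vc {P X : Finset Cell} {c : Cell} (hX : IsMaxVInterval P X) (hc : c ∈ X) :
    X = Vc P c := by
  have hcP : c ∈ P := hX.2.1 hc
  exact maxV_unique hX (Vc_spec hcP).1 hc (Vc_spec hcP).2

noncomputable def Ac (A : Finset (Finset Cell)) (c : Cell) : Finset Cell :=
  if h : ∃ I ∈ A, c ∈ I then h.choose else ∅

lemma Ac_spec {P : Finset Cell} {A : Finset (Finset Cell)} (hA : IsPartition P A)
    {c : Cell} (hc : c ∈ P) : Ac A c ∈ A ∧ c ∈ Ac A c := by
  have hex : ∃ I ∈ A, c ∈ I := by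
    have := hA.2.2 ▸ hc
    simpa [Finset.mem_biUnion] using this
  rw [Ac, dif_pos hex]
  exact hex.choose_spec

lemma Ac_unique {P : Finset Cell} {A : Finset (Finset Cell)} (hA : IsPartition P A)
    {I : Finset Cell} (hI : I ∈ A) {c : Cell} (hc : c ∈ I) : I = Ac A c := by
  have hcP : c ∈ P := maxInterval_subset (hA.1 I hI) hc
  by_contra hne
  exact Finset.disjoint_left.mp (hA.2.1 I hI _ (Ac_spec hA hcP).1 hne) hc (Ac_spec hA hcP).2

lemma Hc_ne_Vc {P : Finset Cell} (hP : IsPolyomino P) (hns : ¬ IsSquareBlock P)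
    {c : Cell} (hc : c ∈ P) : Hc P c ≠ Vc P c := by
  intro heq
  -- then both are the singleton {c}
  have hsing : Hc P c = {c} := by
    ext d
    rw [Finset.mem_singleton]
    constructor
    · intro hd
      have h1 : d.2 = c.2 := (Hc_spec hc).1.1.snd_eq hd (Hc_spec hc).2
      have h2 : d.1 = c.1 := (Vc_spec hc).1.1.fst_eq (heq ▸ hd) (heq ▸ (Hc_spec hc).2)
      exact Prod.ext h2 h1
    · rintro rfl; exact (Hc_spec hc).2
  -- no neighbour of c is in P
  have hnb : ∀ d : Cell, Adjacent c d → d ∉ P := by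
    intro d hadj hdP
    rcases hadj with ⟨h1, h2 | h2⟩ | ⟨h1, h2 | h2⟩
    -- vertical neighbours : contradict maximality of Vc P c
    · -- c.2 = d.2 + 1, d below c
      have hS : IsVSeg ((Finset.Icc d.2 c.2).image (fun y => (c.1, y))) :=
        ⟨c.1, d.2, c.2, by omega, rfl⟩
      have hsub : ((Finset.Icc d.2 c.2).image (fun y => (c.1, y))) ⊆ P := by
        intro e he
        rw [mem_vseg] at he
        have : e = c ∨ e = d := by
          rcases Prod.ext_iff.mpr (⟨rfl, rfl⟩ : e.1 = e.1 ∧ e.2 = e.2) with _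
          by_cases h : e.2 = c.2
          · exact Or.inl (Prod.ext he.2.2 h)
          · exact Or.inr (Prod.ext (he.2.2.trans h1) (by omega))
        rcases this with rfl | rfl
        · exact hc
        · exact hdP
      have hVsub : Vc P c ⊆ ((Finset.Icc d.2 c.2).image (fun y => (c.1, y))) := by
        rw [← heq, hsing]
        intro e he
        rw [Finset.mem_singleton] at he
        subst he
        exact mem_vseg.mpr ⟨by omega, by omega, rfl⟩
      have := (Vc_spec hc).1.2.2 _ hS hsub hVsub
      have hd_mem : d ∈ Vc P c := by
        rw [← this]
        exact mem_vseg.mpr ⟨by omega, by omega, h1.symm⟩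
      rw [← heq, hsing, Finset.mem_singleton] at hd_mem
      subst hd_mem
      omega
    · -- d.2 = c.2 + 1, d above c
      have hS : IsVSeg ((Finset.Icc c.2 d.2).image (fun y => (c.1, y))) :=
        ⟨c.1, c.2, d.2, by omega, rfl⟩
      have hsub : ((Finset.Icc c.2 d.2).image (fun y => (c.1, y))) ⊆ P := by
        intro e he
        rw [mem_vseg] at he
        have : e = c ∨ e = d := by
          by_cases h : e.2 = c.2
          · exact Or.inl (Prod.ext he.2.2 h)
          · exact Or.inr (Prod.ext (he.2.2.trans h1) (by omega))
        rcases this with rfl | rfl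
        · exact hc
        · exact hdP
      have hVsub : Vc P c ⊆ ((Finset.Icc c.2 d.2).image (fun y => (c.1, y))) := by
        rw [← heq, hsing]
        intro e he
        rw [Finset.mem_singleton] at he
        subst he
        exact mem_vseg.mpr ⟨by omega, by omega, rfl⟩
      have := (Vc_spec hc).1.2.2 _ hS hsub hVsub
      have hd_mem : d ∈ Vc P c := by
        rw [← this]
        exact mem_vseg.mpr ⟨by omega, by omega, h1.symm⟩
      rw [← heq, hsing, Finset.mem_singleton] at hd_mem
      subst hd_mem
      omega
    · -- c.1 = d.1 + 1, d left of c
      have hS : IsHSeg ((Finset.Icc d.1 c.1).image (fun x => (x, c.2))) :=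
        ⟨c.2, d.1, c.1, by omega, rfl⟩
      have hsub : ((Finset.Icc d.1 c.1).image (fun x => (x, c.2))) ⊆ P := by
        intro e he
        rw [mem_hseg] at he
        have : e = c ∨ e = d := by
          by_cases h : e.1 = c.1
          · exact Or.inl (Prod.ext h he.2.2)
          · exact Or.inr (Prod.ext (by omega) (he.2.2.trans h1))
        rcases this with rfl | rfl
        · exact hc
        · exact hdP
      have hHsub : Hc P c ⊆ ((Finset.Icc d.1 c.1).image (fun x => (x, c.2))) := by
        rw [hsing]
        intro e he
        rw [Finset.mem_singleton] at he
        subst he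
        exact mem_hseg.mpr ⟨by omega, by omega, rfl⟩
      have := (Hc_spec hc).1.2.2 _ hS hsub hHsub
      have hd_mem : d ∈ Hc P c := by
        rw [← this]
        exact mem_hseg.mpr ⟨by omega, by omega, h1.symm⟩
      rw [hsing, Finset.mem_singleton] at hd_mem
      subst hd_mem
      omega
    · -- d.1 = c.1 + 1, d right of c
      have hS : IsHSeg ((Finset.Icc c.1 d.1).image (fun x => (x, c.2))) :=
        ⟨c.2, c.1, d.1, by omega, rfl⟩
      have hsub : ((Finset.Icc c.1 d.1).image (fun x => (x, c.2))) ⊆ P := by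
        intro e he
        rw [mem_hseg] at he
        have : e = c ∨ e = d := by
          by_cases h : e.1 = c.1
          · exact Or.inl (Prod.ext h he.2.2)
          · exact Or.inr (Prod.ext (by omega) (he.2.2.trans h1))
        rcases this with rfl | rfl
        · exact hc
        · exact hdP
      have hHsub : Hc P c ⊆ ((Finset.Icc c.1 d.1).image (fun x => (x, c.2))) := by
        rw [hsing]
        intro e he
        rw [Finset.mem_singleton] at he
        subst he
        exact mem_hseg.mpr ⟨by omega, by omega, rfl⟩
      have := (Hc_spec hc).1.2.2 _ hS hsub hHsub
      have hd_mem : d ∈ Hc P c := by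
        rw [← this]
        exact mem_hseg.mpr ⟨by omega, by omega, h1.symm⟩
      rw [hsing, Finset.mem_singleton] at hd_mem
      subst hd_mem
      omega
  -- P = {c}
  have hPc : P = {c} := by
    apply Finset.Subset.antisymm
    · intro d hd
      rw [Finset.mem_singleton]
      rcases (hP.2 c hc d hd).cases_head with h | ⟨e, ⟨hadj, _, heP⟩, _⟩
      · exact h.symm
      · exact absurd heP (hnb e hadj)
    · intro d hd
      rw [Finset.mem_singleton] at hd
      subst hd; exact hc
  -- contradiction with hns
  apply hns
  refine ⟨c.1, c.2, 1, le_refl _, ?_⟩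
  rw [hPc]
  ext ⟨u, v⟩
  simp only [Finset.mem_singleton, Finset.mem_product, Finset.mem_Icc, Prod.ext_iff]
  omega

noncomputable def Bc (P : Finset Cell) (A : Finset (Finset Cell)) (c : Cell) : Finset Cell :=
  if Ac A c = Hc P c then Vc P c else Hc P c

/-- The pair `(Ac, Bc)` is `(Hc, Vc)` in some order. -/
lemma AB_pair {P : Finset Cell} {A : Finset (Finset Cell)} (hP : IsPolyomino P)
    (hns : ¬ IsSquareBlock P) (hA : IsPartition P A) {c : Cell} (hc : c ∈ P) :
    (Ac A c = Hc P c ∧ Bc P A c = Vc P c) ∨ (Ac A c = Vc P c ∧ Bc P A c = Hc P c) := by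
  by_cases h : Ac A c = Hc P c
  · left; exact ⟨h, by rw [Bc, if_pos h]⟩
  · right
    refine ⟨?_, by rw [Bc, if_neg h]⟩
    rcases hA.1 _ (Ac_spec hA hc).1 with hH | hV
    · exact absurd (maxH_eq_Hc hH (Ac_spec hA hc).2) h
    · exact maxV_eq_Vc hV (Ac_spec hA hc).2

lemma Bc_spec {P : Finset Cell} {A : Finset (Finset Cell)} (hP : IsPolyomino P)
    (hns : ¬ IsSquareBlock P) (hA : IsPartition P A) {c : Cell} (hc : c ∈ P) :
    IsMaxInterval P (Bc P A c) ∧ c ∈ Bc P A c ∧ Bc P A c ∉ A ∧ Bc P A c ≠ Ac A c := by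
  have hHV := Hc_ne_Vc hP hns hc
  have hBne : Bc P A c ≠ Ac A c := by
    rcases AB_pair hP hns hA hc with ⟨h1, h2⟩ | ⟨h1, h2⟩
    · rw [h1, h2]; exact fun h => hHV h.symm
    · rw [h1, h2]; exact hHV
  have hmax : IsMaxInterval P (Bc P A c) ∧ c ∈ Bc P A c := by
    rcases AB_pair hP hns hA hc with ⟨-, h2⟩ | ⟨-, h2⟩
    · rw [h2]; exact ⟨Or.inr (Vc_spec hc).1, (Vc_spec hc).2⟩
    · rw [h2]; exact ⟨Or.inl (Hc_spec hc).1, (Hc_spec hc).2⟩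
  refine ⟨hmax.1, hmax.2, ?_, hBne⟩
  intro hBA
  exact hBne (Ac_unique hA hBA hmax.2).symm.symm

/-- Any maximal interval through a cell of `P` is `Ac` or `Bc` of that cell. -/
lemma maxInterval_eq_AB {P : Finset Cell} {A : Finset (Finset Cell)} (hP : IsPolyomino P)
    (hns : ¬ IsSquareBlock P) (hA : IsPartition P A) {X : Finset Cell} {c : Cell}
    (hX : IsMaxInterval P X) (hc : c ∈ X) :
    X = Ac A c ∨ X = Bc P A c := by
  have hcP : c ∈ P := maxInterval_subset hX hc
  have : X = Hc P c ∨ X = Vc P c := by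
    rcases hX with hH | hV
    · exact Or.inl (maxH_eq_Hc hH hc)
    · exact Or.inr (maxV_eq_Vc hV hc)
  rcases AB_pair hP hns hA hcP with ⟨h1, h2⟩ | ⟨h1, h2⟩ <;> rcases this with h | h
  · exact Or.inl (h.trans h1.symm)
  · exact Or.inr (h.trans h2.symm)
  · exact Or.inr (h.trans h2.symm)
  · exact Or.inl (h.trans h1.symm)

lemma Bc_eq_of_mem {P : Finset Cell} {A : Finset (Finset Cell)} (hP : IsPolyomino P)
    (hns : ¬ IsSquareBlock P) (hA : IsPartition P A) {c d : Cell} (hc : c ∈ P)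
    (hd : d ∈ Bc P A c) : Bc P A d = Bc P A c ∧ d ∈ P := by
  have hdP : d ∈ P := maxInterval_subset (Bc_spec hP hns hA hc).1 hd
  rcases maxInterval_eq_AB hP hns hA (Bc_spec hP hns hA hc).1 hd with h | h
  · exfalso
    exact (Bc_spec hP hns hA hc).2.2.1 (h ▸ (Ac_spec hA hdP).1)
  · exact ⟨h.symm, hdP⟩

lemma Ac_eq_of_mem {P : Finset Cell} {A : Finset (Finset Cell)} (hA : IsPartition P A)
    {c d : Cell} (hc : c ∈ P) (hd : d ∈ Ac A c) : Ac A d = Ac A c :=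
  (Ac_unique hA (Ac_spec hA hc).1 hd).symm

/-- `Bc` is injective on each member of `A`. -/
lemma injB {P : Finset Cell} {A : Finset (Finset Cell)} (hP : IsPolyomino P)
    (hns : ¬ IsSquareBlock P) (hA : IsPartition P A) {I : Finset Cell} (hI : I ∈ A)
    {c d : Cell} (hc : c ∈ I) (hd : d ∈ I) (h : Bc P A c = Bc P A d) : c = d := by
  have hcP : c ∈ P := maxInterval_subset (hA.1 I hI) hc
  have hdP : d ∈ P := maxInterval_subset (hA.1 I hI) hd
  have hAc : I = Ac A c := Ac_unique hA hI hc
  refine max_inter_subsingleton (hA.1 I hI) (Bc_spec hP hns hA hcP).1 ?_ hc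
    (Bc_spec hP hns hA hcP).2.1 hd (h ▸ (Bc_spec hP hns hA hdP).2.1)
  intro hIB
  exact (Bc_spec hP hns hA hcP).2.2.2 ((hIB ▸ hAc).symm).symm

/-- `Ac` is injective on each maximal interval not in `A`. -/
lemma injA {P : Finset Cell} {A : Finset (Finset Cell)} (hA : IsPartition P A)
    {K : Finset Cell} (hK : IsMaxInterval P K) (hKA : K ∉ A)
    {c d : Cell} (hc : c ∈ K) (hd : d ∈ K) (h : Ac A c = Ac A d) : c = d := by
  have hcP : c ∈ P := maxInterval_subset hK hc
  have hdP : d ∈ P := maxInterval_subset hK hd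
  refine max_inter_subsingleton hK (hA.1 _ (Ac_spec hA hcP).1) ?_ hc
    (Ac_spec hA hcP).2 hd (h ▸ (Ac_spec hA hdP).2)
  intro hKA'
  exact hKA (hKA' ▸ (Ac_spec hA hcP).1)

-- ### Block C : building embeddings from Hall systems

lemma embed_of_hall {P : Finset Cell} {A : Finset (Finset Cell)} (hP : IsPolyomino P)
    (hns : ¬ IsSquareBlock P) (hA : IsPartition P A) {J : Finset Cell}
    (hJmax : IsMaxInterval P J) (hJA : J ∉ A)
    (h : ∀ s : Finset {I // I ∈ A},
      s.card ≤ (s.biUnion (fun I => (I.val.image (Bc P A)) \ {J})).card) :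
    IsEmbedded P J := by
  classical
  obtain ⟨f, hfinj, hfmem⟩ :=
    (Finset.all_card_le_biUnion_card_iff_exists_injective
      (fun I : {I // I ∈ A} => (I.val.image (Bc P A)) \ {J})).mp h
  have hex : ∀ I : {I // I ∈ A}, ∃ e, e ∈ I.val ∧ Bc P A e = f I := by
    intro I
    have := hfmem I
    rw [Finset.mem_sdiff] at this
    obtain ⟨e, he, hBe⟩ := Finset.mem_image.mp this.1
    exact ⟨e, he, hBe⟩
  choose e he hBe using hex
  have hfJ : ∀ I, f I ≠ J := by
    intro I
    have := hfmem I
    rw [Finset.mem_sdiff, Finset.mem_singleton] at this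
    exact this.2
  have heP : ∀ I, e I ∈ P := fun I => maxInterval_subset (hA.1 _ I.2) (he I)
  have hAe : ∀ I, Ac A (e I) = I.val := fun I => (Ac_unique hA I.2 (he I)).symm
  have hFJ : ∀ I : {I // I ∈ A}, e I ∉ J := by
    intro I hin
    rcases maxInterval_eq_AB hP hns hA hJmax hin with hx | hx
    · rw [hAe I] at hx; exact hJA (hx ▸ I.2)
    · rw [hBe I] at hx; exact hfJ I hx.symm
  refine ⟨Finset.univ.image e, ⟨?_, ?_⟩, ?_, ?_⟩
  · intro x hx
    obtain ⟨I, -, rfl⟩ := Finset.mem_image.mp hx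
    exact heP I
  · intro x hx y hy hatk
    obtain ⟨I, -, rfl⟩ := Finset.mem_image.mp hx
    obtain ⟨I', -, rfl⟩ := Finset.mem_image.mp hy
    obtain ⟨hne, X, hXmax, hxX, hyX⟩ := hatk
    rcases maxInterval_eq_AB hP hns hA hXmax hxX with h1 | h1 <;>
      rcases maxInterval_eq_AB hP hns hA hXmax hyX with h2 | h2
    · rw [hAe I] at h1
      rw [hAe I'] at h2
      exact hne (congrArg e (Subtype.ext (h1.symm.trans h2)))
    · rw [hAe I] at h1
      rw [hBe I'] at h2
      exact (Bc_spec hP hns hA (heP I')).2.2.1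
        (by rw [hBe I', h2.symm.trans h1]; exact I.2)
    · rw [hBe I] at h1
      rw [hAe I'] at h2
      exact (Bc_spec hP hns hA (heP I)).2.2.1
        (by rw [hBe I, h1.symm.trans h2]; exact I'.2)
    · rw [hBe I] at h1
      rw [hBe I'] at h2
      exact hne (congrArg e (hfinj (h1.symm.trans h2)))
  · rw [Finset.eq_empty_iff_forall_notMem]
    intro x hx
    rw [Finset.mem_inter] at hx
    obtain ⟨I, -, rfl⟩ := Finset.mem_image.mp hx.1
    exact hFJ I hx.2
  · intro d hd
    have hdP : d ∈ P := maxInterval_subset hJmax hd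
    set I : {I // I ∈ A} := ⟨Ac A d, (Ac_spec hA hdP).1⟩ with hIdef
    refine ⟨e I, Finset.mem_image_of_mem e (Finset.mem_univ I), ?_, Ac A d,
      hA.1 _ (Ac_spec hA hdP).1, ?_, (Ac_spec hA hdP).2⟩
    · intro hcontra
      exact hFJ I (hcontra ▸ hd)
    · have := he I
      rw [hIdef] at this
      exact this

lemma embed_interval_of_hall {P : Finset Cell} {A : Finset (Finset Cell)} (hP : IsPolyomino P)
    (hns : ¬ IsSquareBlock P) (hA : IsPartition P A) {I₀ : Finset Cell} (hI₀ : I₀ ∈ A)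
    (h : ∀ s : Finset {c // c ∈ I₀},
      s.card ≤ (s.biUnion (fun c => ((Bc P A c.val).image (Ac A)) \ {I₀})).card) :
    IsEmbedded P I₀ := by
  classical
  obtain ⟨g, hginj, hgmem⟩ :=
    (Finset.all_card_le_biUnion_card_iff_exists_injective
      (fun c : {c // c ∈ I₀} => ((Bc P A c.val).image (Ac A)) \ {I₀})).mp h
  have hvalP : ∀ c : {c // c ∈ I₀}, c.val ∈ P :=
    fun c => maxInterval_subset (hA.1 _ hI₀) c.2
  have hex : ∀ c : {c // c ∈ I₀}, ∃ d, d ∈ Bc P A c.val ∧ Ac A d = g c := by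
    intro c
    have := hgmem c
    rw [Finset.mem_sdiff] at this
    obtain ⟨d, hd, hAd⟩ := Finset.mem_image.mp this.1
    exact ⟨d, hd, hAd⟩
  choose d hd hAd using hex
  have hgI : ∀ c, g c ≠ I₀ := by
    intro c
    have := hgmem c
    rw [Finset.mem_sdiff, Finset.mem_singleton] at this
    exact this.2
  have hdP : ∀ c, d c ∈ P := fun c => (Bc_eq_of_mem hP hns hA (hvalP c) (hd c)).2
  have hBd : ∀ c, Bc P A (d c) = Bc P A c.val :=
    fun c => (Bc_eq_of_mem hP hns hA (hvalP c) (hd c)).1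
  have hFI : ∀ c : {c // c ∈ I₀}, d c ∉ I₀ := by
    intro c hin
    exact hgI c (((Ac_unique hA hI₀ hin).trans (hAd c)).symm ▸ rfl)
  refine ⟨Finset.univ.image d, ⟨?_, ?_⟩, ?_, ?_⟩
  · intro x hx
    obtain ⟨c, -, rfl⟩ := Finset.mem_image.mp hx
    exact hdP c
  · intro x hx y hy hatk
    obtain ⟨c, -, rfl⟩ := Finset.mem_image.mp hx
    obtain ⟨c', -, rfl⟩ := Finset.mem_image.mp hy
    obtain ⟨hne, X, hXmax, hxX, hyX⟩ := hatk
    rcases maxInterval_eq_AB hP hns hA hXmax hxX with h1 | h1 <;>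
      rcases maxInterval_eq_AB hP hns hA hXmax hyX with h2 | h2
    · rw [hAd c] at h1
      rw [hAd c'] at h2
      exact hne (congrArg d (hginj (h1.symm.trans h2)))
    · rw [hAd c] at h1
      rw [hBd c'] at h2
      have : g c = Bc P A c'.val := h1.symm.trans h2
      exact (Bc_spec hP hns hA (hvalP c')).2.2.1 (this ▸ (hAd c ▸ (Ac_spec hA (hdP c)).1))
    · rw [hBd c] at h1
      rw [hAd c'] at h2
      have : g c' = Bc P A c.val := h2.symm.trans h1
      exact (Bc_spec hP hns hA (hvalP c)).2.2.1 (this ▸ (hAd c' ▸ (Ac_spec hA (hdP c')).1))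
    · rw [hBd c] at h1
      rw [hBd c'] at h2
      have : Bc P A c.val = Bc P A c'.val := h1.symm.trans h2
      exact hne (congrArg d (Subtype.ext (injB hP hns hA hI₀ c.2 c'.2 this)))
  · rw [Finset.eq_empty_iff_forall_notMem]
    intro x hx
    rw [Finset.mem_inter] at hx
    obtain ⟨c, -, rfl⟩ := Finset.mem_image.mp hx.1
    exact hFI c hx.2
  · intro x hx
    set c : {c // c ∈ I₀} := ⟨x, hx⟩
    refine ⟨d c, Finset.mem_image_of_mem d (Finset.mem_univ c), ?_, Bc P A x,
      (Bc_spec hP hns hA (hvalP c)).1, hd c, (Bc_spec hP hns hA (hvalP c)).2.1⟩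
    intro hcontra
    exact hFI c (hcontra ▸ hx)

/-- Convert a Hall condition on ambient subsets to the subtype form. -/
lemma hall_convert {α : Type} [DecidableEq α] {X : Finset α} {t : α → Finset (Finset Cell)}
    (h : ∀ T ⊆ X, T.card ≤ (T.biUnion t).card) :
    ∀ s : Finset {x // x ∈ X}, s.card ≤ (s.biUnion (fun x => t x.val)).card := by
  intro s
  have h1 : (s.image Subtype.val).card = s.card :=
    Finset.card_image_of_injective _ Subtype.val_injective
  have h2 : (s.image Subtype.val).biUnion t = s.biUnion (fun x => t x.val) :=
    Finset.image_biUnion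
  have h3 : s.image Subtype.val ⊆ X := by
    intro x hx
    obtain ⟨y, -, rfl⟩ := Finset.mem_image.mp hx
    exact y.2
  calc s.card = (s.image Subtype.val).card := h1.symm
    _ ≤ ((s.image Subtype.val).biUnion t).card := h _ h3
    _ = _ := by rw [h2]

/-- Convert a failed Hall condition on the subtype form to an ambient violator. -/
lemma hall_unconvert {α : Type} [DecidableEq α] {X : Finset α} {t : α → Finset (Finset Cell)}
    (h : ∃ s : Finset {x // x ∈ X}, (s.biUnion (fun x => t x.val)).card < s.card) :
    ∃ T ⊆ X, (T.biUnion t).card < T.card := by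
  obtain ⟨s, hs⟩ := h
  refine ⟨s.image Subtype.val, ?_, ?_⟩
  · intro x hx
    obtain ⟨y, -, rfl⟩ := Finset.mem_image.mp hx
    exact y.2
  · rw [Finset.image_biUnion, Finset.card_image_of_injective _ Subtype.val_injective]
    exact hs

lemma crossing {r : Cell → Cell → Prop} {Q : Finset Cell} {c d : Cell}
    (h : Relation.ReflTransGen r c d) (hc : c ∈ Q) (hd : d ∉ Q) :
    ∃ u v, r u v ∧ u ∈ Q ∧ v ∉ Q := by
  classical
  revert hd
  induction h with
  | refl => intro hd; exact absurd hc hd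
  | @tail b c' hab hbc ih =>
    intro hd
    by_cases hb : b ∈ Q
    · exact ⟨b, c', hbc, hb, hd⟩
    · exact ih hb

set_option maxHeartbeats 1000000 in
lemma main_h {P : Finset Cell} (hP : IsPolyomino P) (hns : ¬ IsSquareBlock P)
    {A : Finset (Finset Cell)} (hA : IsSuperPartition P A)
    {J : Finset Cell} (hJ : IsMaxHInterval P J) (hJA : J ∉ A) : IsEmbedded P J := by
  classical
  have hpart := hA.1
  by_contra hemb
  -- Level-1 Hall failure: a violating family of members of `A` exists
  set t₁ : Finset Cell → Finset (Finset Cell) :=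
    fun I => (I.image (Bc P A)) \ {J} with ht₁
  have hviol : ∃ T ⊆ A, (T.biUnion t₁).card < T.card := by
    apply hall_unconvert
    by_contra hno
    push_neg at hno
    exact hemb (embed_of_hall hP hns hpart (Or.inl hJ) hJA (fun s => hno s))
  -- a violator of minimal cardinality
  obtain ⟨Tv, hTvA, hTvlt⟩ := hviol
  obtain ⟨S₀, hS₀V, hS₀min⟩ :=
    (A.powerset.filter (fun S => (S.biUnion t₁).card < S.card)).exists_min_image
      Finset.card ⟨Tv, by simp only [Finset.mem_filter, Finset.mem_powerset]; exact ⟨hTvA, hTvlt⟩⟩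
  simp only [Finset.mem_filter, Finset.mem_powerset] at hS₀V
  obtain ⟨hS₀A, hS₀lt⟩ := hS₀V
  set k := S₀.card with hk
  set W' := S₀.biUnion t₁ with hW'
  have hW'lt : W'.card < k := hS₀lt
  have hminor : ∀ S' ⊆ A, S'.card < k → S'.card ≤ (S'.biUnion t₁).card := by
    intro S' hsub hlt
    by_contra hc
    push_neg at hc
    have hmem : S' ∈ A.powerset.filter (fun S => (S.biUnion t₁).card < S.card) := by
      simp only [Finset.mem_filter, Finset.mem_powerset]; exact ⟨hsub, hc⟩
    exact absurd (hS₀min S' hmem) (by omega)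
  have hS₀ne : S₀.Nonempty := Finset.card_pos.mp (by omega)
  -- members of S₀ are members of A
  have hmemA : ∀ I ∈ S₀, I ∈ A := fun I hI => hS₀A hI
  have hmemP : ∀ I ∈ S₀, I ⊆ P := fun I hI => maxInterval_subset (hpart.1 I (hmemA I hI))
  -- case k = 1 : direct contradiction with superness
  by_cases hk1 : k = 1
  · obtain ⟨I, rfl⟩ := Finset.card_eq_one.mp hk1
    have hIA : I ∈ A := hmemA I (Finset.mem_singleton_self I)
    have ht₁I : t₁ I = ∅ := by
      have h0 := hW'lt
      rw [hk1, hW', Finset.singleton_biUnion] at h0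
      exact Finset.card_eq_zero.mp (by omega)
    have hBsub : I.image (Bc P A) ⊆ {J} := by
      rw [ht₁] at ht₁I
      exact Finset.sdiff_eq_empty_iff_subset.mp ht₁I
    have hIcard : (I.image (Bc P A)).card = I.card :=
      Finset.card_image_of_injOn (fun c hc d hd h => injB hP hns hpart hIA hc hd h)
    have hInonempty : I.Nonempty := maxInterval_nonempty (hpart.1 I hIA)
    have : I.card = 1 := by
      have h1 := Finset.card_le_card hBsub
      rw [hIcard, Finset.card_singleton] at h1
      have h2 := Finset.card_pos.mpr hInonempty
      omega
    obtain ⟨c, rfl⟩ := Finset.card_eq_one.mp this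
    have hcP : c ∈ P := hmemP _ (Finset.mem_singleton_self _) (Finset.mem_singleton_self c)
    have hBcJ : Bc P A c = J := by
      have : Bc P A c ∈ ({J} : Finset (Finset Cell)) :=
        hBsub (Finset.mem_image_of_mem _ (Finset.mem_singleton_self c))
      exact Finset.mem_singleton.mp this
    have hcJ : c ∈ J := hBcJ ▸ (Bc_spec hP hns hpart hcP).2.1
    have hJ2 : 1 < J.card := by
      by_contra hle
      push_neg at hle
      have hJc : J = {c} := by
        have h0 := Finset.card_pos.mpr ⟨c, hcJ⟩
        have : J.card = 1 := by omega
        obtain ⟨e, he⟩ := Finset.card_eq_one.mp this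
        rw [he] at hcJ ⊢
        rw [Finset.mem_singleton] at hcJ
        rw [hcJ]
      exact hJA (hJc ▸ hIA)
    obtain ⟨e, heJ, hec⟩ := Finset.exists_mem_ne hJ2 c
    apply hA.2 _ hIA
    refine ⟨{e}, ⟨Finset.singleton_subset_iff.mpr (hJ.2.1 heJ), ?_⟩, ?_, ?_⟩
    · intro x hx y hy hatk
      rw [Finset.mem_singleton] at hx hy
      subst hx; subst hy
      exact hatk.1 rfl
    · rw [Finset.singleton_inter_of_notMem]
      rw [Finset.mem_singleton]
      exact hec
    · intro x hx
      rw [Finset.mem_singleton] at hx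
      subst hx
      exact ⟨e, Finset.mem_singleton_self e, hec, J, Or.inl hJ, heJ, hcJ⟩
  -- now k ≥ 2
  have hk2 : 2 ≤ k := by
    have : 1 ≤ k := Finset.card_pos.mpr hS₀ne
    omega
  -- Hall systems on S₀.erase I
  have hfS : ∀ I : {I // I ∈ S₀}, ∃ f : {K // K ∈ S₀.erase I.val} → Finset Cell,
      Function.Injective f ∧ ∀ K, f K ∈ t₁ K.val := by
    intro I
    apply (Finset.all_card_le_biUnion_card_iff_exists_injective
      (fun K : {K // K ∈ S₀.erase I.val} => t₁ K.val)).mp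
    apply hall_convert
    intro T hsub
    refine hminor T (fun x hx => hS₀A (Finset.erase_subset _ _ (hsub hx))) ?_
    calc T.card ≤ (S₀.erase I.val).card := Finset.card_le_card hsub
      _ < k := by
          rw [Finset.card_erase_of_mem I.2]
          omega
  choose fI hfinj hfmem using hfS
  -- the image of each fI is exactly W', and W'.card + 1 = k
  have hfW : ∀ (I : {I // I ∈ S₀}) (K : {K // K ∈ S₀.erase I.val}), fI I K ∈ W' := by
    intro I K
    exact Finset.mem_biUnion.mpr ⟨K.val, Finset.erase_subset _ _ K.2, hfmem I K⟩
  obtain ⟨I₀v, hI₀v⟩ := hS₀ne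
  have hW'card : W'.card + 1 = k := by
    have himg : (Finset.univ.image (fI ⟨I₀v, hI₀v⟩)) ⊆ W' := by
      intro K hK
      obtain ⟨K', -, rfl⟩ := Finset.mem_image.mp hK
      exact hfW _ K'
    have hcard : (Finset.univ.image (fI ⟨I₀v, hI₀v⟩)).card = k - 1 := by
      rw [Finset.card_image_of_injective _ (hfinj _), Finset.card_univ, Fintype.card_coe,
        Finset.card_erase_of_mem hI₀v]
    have := Finset.card_le_card himg
    omega
  have hsurj : ∀ (I : {I // I ∈ S₀}), ∀ K ∈ W', ∃ K' : {K // K ∈ S₀.erase I.val}, fI I K' = K := by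
    intro I K hK
    have himg : (Finset.univ.image (fI I)) ⊆ W' := by
      intro K0 hK0
      obtain ⟨K', -, rfl⟩ := Finset.mem_image.mp hK0
      exact hfW _ K'
    have hcard : (Finset.univ.image (fI I)).card = k - 1 := by
      rw [Finset.card_image_of_injective _ (hfinj _), Finset.card_univ, Fintype.card_coe,
        Finset.card_erase_of_mem I.2]
    have heq : Finset.univ.image (fI I) = W' :=
      Finset.eq_of_subset_of_card_le himg (by omega)
    rw [← heq] at hK
    obtain ⟨K', -, hfK⟩ := Finset.mem_image.mp hK
    exact ⟨K', hfK⟩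
  -- Level-2 Hall failures from superness
  set t₂ : Finset Cell → Cell → Finset (Finset Cell) :=
    fun I c => ((Bc P A c).image (Ac A)) \ {I} with ht₂
  have hT2 : ∀ I ∈ A, ∃ T ⊆ I, (T.biUnion (t₂ I)).card < T.card := by
    intro I hI
    by_contra hno
    push_neg at hno
    have hcond : ∀ s : Finset {c // c ∈ I},
        s.card ≤ (s.biUnion (fun c => ((Bc P A c.val).image (Ac A)) \ {I})).card :=
      by
        apply hall_convert (X := I) (t := t₂ I)
        exact fun T h => hno T h
    exact hA.2 I hI (embed_interval_of_hall hP hns hpart hI hcond)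
  -- Round 1 : for each member of S₀, its Hall-failure witness meets J and stays inside S₀
  have round1 : ∀ I : {I // I ∈ S₀}, ∃ T ⊆ I.val,
      (∃ c₀ ∈ T, Bc P A c₀ = J) ∧
      (T.biUnion (t₂ I.val)).card + 1 = T.card ∧
      T.biUnion (t₂ I.val) ⊆ S₀ := by
    intro I
    obtain ⟨T, hTI, hMlt⟩ := hT2 I.val (hS₀A I.2)
    have hIA : I.val ∈ A := hS₀A I.2
    have hTP : ∀ c ∈ T, c ∈ P := fun c hc => hmemP I.val I.2 (hTI hc)
    have hcardBT : (T.image (Bc P A)).card = T.card :=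
      Finset.card_image_of_injOn (fun c hc d hd h => injB hP hns hpart hIA (hTI hc) (hTI hd) h)
    have hsdiffW : (T.image (Bc P A)) \ {J} ⊆ W' := by
      intro K hK
      rw [Finset.mem_sdiff] at hK
      refine Finset.mem_biUnion.mpr ⟨I.val, I.2, ?_⟩
      rw [ht₁]
      exact Finset.mem_sdiff.mpr ⟨Finset.image_subset_image hTI hK.1, hK.2⟩
    -- an injection from the non-J part of the image into the failure set M
    set M := T.biUnion (t₂ I.val) with hM
    set g : Finset Cell → Finset Cell := fun K =>
      if h : ∃ K' : {K // K ∈ S₀.erase I.val}, fI I K' = K then h.choose.val else ∅ with hg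
    have hgmap : ∀ K ∈ (T.image (Bc P A)) \ {J}, g K ∈ M ∧ g K ∈ S₀.erase I.val := by
      intro K hK
      have hex : ∃ K' : {K // K ∈ S₀.erase I.val}, fI I K' = K := hsurj I K (hsdiffW hK)
      have hgK : g K = hex.choose.val := by rw [hg]; exact dif_pos hex
      have hfK' : fI I hex.choose = K := hex.choose_spec
      obtain ⟨hKim, hKJ⟩ := Finset.mem_sdiff.mp hK
      obtain ⟨c, hcT, hBc⟩ := Finset.mem_image.mp hKim
      have hfm := hfmem I hex.choose
      rw [hfK', ht₁, Finset.mem_sdiff] at hfm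
      obtain ⟨dd, hdd, hBdd⟩ := Finset.mem_image.mp hfm.1
      have hK'A : hex.choose.val ∈ A := hS₀A (Finset.erase_subset _ _ hex.choose.2)
      have hddP : dd ∈ P := maxInterval_subset (hpart.1 _ hK'A) hdd
      have h1 : dd ∈ Bc P A c := by
        rw [hBc, ← hBdd]
        exact (Bc_spec hP hns hpart hddP).2.1
      have h2 : Ac A dd = hex.choose.val := (Ac_unique hpart hK'A hdd).symm
      have hne : hex.choose.val ≠ I.val := (Finset.mem_erase.mp hex.choose.2).1
      have hmemM : g K ∈ M := by
        rw [hM]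
        refine Finset.mem_biUnion.mpr ⟨c, hcT, ?_⟩
        rw [ht₂, hgK]
        exact Finset.mem_sdiff.mpr ⟨Finset.mem_image.mpr ⟨dd, h1, h2⟩,
          by rw [Finset.mem_singleton]; exact hne⟩
      exact ⟨hmemM, hgK ▸ hex.choose.2⟩
    have hginj : Set.InjOn g ↑((T.image (Bc P A)) \ {J}) := by
      intro K1 h1 K2 h2 heq
      have e1 : ∃ K' : {K // K ∈ S₀.erase I.val}, fI I K' = K1 :=
        hsurj I K1 (hsdiffW (Finset.mem_coe.mp h1))
      have e2 : ∃ K' : {K // K ∈ S₀.erase I.val}, fI I K' = K2 :=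
        hsurj I K2 (hsdiffW (Finset.mem_coe.mp h2))
      have hg1 : g K1 = e1.choose.val := by rw [hg]; exact dif_pos e1
      have hg2 : g K2 = e2.choose.val := by rw [hg]; exact dif_pos e2
      rw [hg1, hg2] at heq
      rw [← e1.choose_spec, ← e2.choose_spec, Subtype.ext heq]
    have hcard_le : ((T.image (Bc P A)) \ {J}).card ≤ M.card :=
      Finset.card_le_card_of_injOn g (fun K hK => (hgmap K hK).1) hginj
    have hJmem : J ∈ T.image (Bc P A) := by
      by_contra hJn
      have hsd : (T.image (Bc P A)) \ {J} = T.image (Bc P A) := by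
        apply Finset.sdiff_eq_self_iff_disjoint.mpr
        simp [hJn]
      rw [hsd, hcardBT] at hcard_le
      omega
    have hsplit : ((T.image (Bc P A)) \ {J}).card + 1 = (T.image (Bc P A)).card := by
      have := Finset.card_sdiff_add_card_eq_card (Finset.singleton_subset_iff.mpr hJmem)
      rw [Finset.card_singleton] at this
      exact this
    have hMcount : M.card + 1 = T.card := by omega
    have hMsub : M ⊆ S₀ := by
      have himgsub : ((T.image (Bc P A)) \ {J}).image g ⊆ M :=
        fun x hx => by
          obtain ⟨K, hK, rfl⟩ := Finset.mem_image.mp hx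
          exact (hgmap K hK).1
      have himgcard : (((T.image (Bc P A)) \ {J}).image g).card = M.card := by
        rw [Finset.card_image_of_injOn hginj]
        omega
      have heqM : ((T.image (Bc P A)) \ {J}).image g = M :=
        Finset.eq_of_subset_of_card_le himgsub (by omega)
      intro x hx
      rw [← heqM] at hx
      obtain ⟨K, hK, rfl⟩ := Finset.mem_image.mp hx
      exact Finset.erase_subset _ _ (hgmap K hK).2
    obtain ⟨c₀, hc₀T, hBc₀⟩ := Finset.mem_image.mp hJmem
    exact ⟨T, hTI, ⟨c₀, hc₀T, hBc₀⟩, hMcount, hMsub⟩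
  -- global facts about J
  set Is₀ : {I // I ∈ S₀} := ⟨I₀v, hI₀v⟩ with hIs₀
  obtain ⟨T₀, hT₀sub, ⟨c₀, hc₀T, hBc₀⟩, -, hM₀sub⟩ := round1 Is₀
  have hJQ : ∀ dc ∈ J, Ac A dc ∈ S₀ := by
    intro dc hdc
    have hdcB : dc ∈ Bc P A c₀ := by rw [hBc₀]; exact hdc
    by_cases h : Ac A dc = Is₀.val
    · rw [h]; exact Is₀.2
    · refine hM₀sub (Finset.mem_biUnion.mpr ⟨c₀, hc₀T, ?_⟩)
      rw [ht₂]
      exact Finset.mem_sdiff.mpr ⟨Finset.mem_image.mpr ⟨dc, hdcB, rfl⟩,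
        by rw [Finset.mem_singleton]; exact h⟩
  have himageJ : J.image (Ac A) = S₀ := by
    apply Finset.Subset.antisymm
    · intro x hx
      obtain ⟨dc, hdc, rfl⟩ := Finset.mem_image.mp hx
      exact hJQ dc hdc
    · intro I hI
      obtain ⟨T, hTsub, ⟨c₁, hc₁T, hBc₁⟩, -, -⟩ := round1 ⟨I, hI⟩
      have hc₁P : c₁ ∈ P := hmemP I hI (hTsub hc₁T)
      have hc₁J : c₁ ∈ J := by rw [← hBc₁]; exact (Bc_spec hP hns hpart hc₁P).2.1
      exact Finset.mem_image.mpr ⟨c₁, hc₁J, (Ac_unique hpart (hS₀A hI) (hTsub hc₁T)).symm⟩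
  have hJP : J ⊆ P := hJ.2.1
  have hkJ : J.card = k := by
    have h1 : (J.image (Ac A)).card = J.card :=
      Finset.card_image_of_injOn (fun c hc d hd h => injA hpart (Or.inl hJ) hJA hc hd h)
    rw [himageJ] at h1
    rw [hk]
    exact h1.symm
  -- the common family of perpendicular intervals
  set 𝒦 : Finset (Finset Cell) := insert J W' with h𝒦
  have hJW' : J ∉ W' := by
    intro h
    obtain ⟨I, -, hKt⟩ := Finset.mem_biUnion.mp h
    rw [ht₁, Finset.mem_sdiff, Finset.mem_singleton] at hKt
    exact hKt.2 rfl
  have h𝒦card : 𝒦.card = k := by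
    rw [h𝒦, Finset.card_insert_of_notMem hJW']
    omega
  -- Round 2 : exact equalities
  have round2 : ∀ I : {I // I ∈ S₀}, I.val.card = k ∧ I.val.image (Bc P A) = 𝒦 ∧
      (∀ c ∈ I.val, ∀ dd ∈ Bc P A c, Ac A dd ∈ S₀) := by
    intro I
    obtain ⟨T, hTsub, ⟨c₁, hc₁T, hBc₁⟩, hMcount, hMsub⟩ := round1 I
    have hIA : I.val ∈ A := hS₀A I.2
    have hback : S₀.erase I.val ⊆ T.biUnion (t₂ I.val) := by
      intro x hx
      have hxS : x ∈ S₀ := Finset.erase_subset _ _ hx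
      have hxJ : x ∈ J.image (Ac A) := himageJ ▸ hxS
      obtain ⟨dd, hddJ, hAdd⟩ := Finset.mem_image.mp hxJ
      refine Finset.mem_biUnion.mpr ⟨c₁, hc₁T, ?_⟩
      rw [ht₂]
      refine Finset.mem_sdiff.mpr ⟨Finset.mem_image.mpr ⟨dd, ?_, hAdd⟩, ?_⟩
      · rw [hBc₁]; exact hddJ
      · rw [Finset.mem_singleton]; exact (Finset.mem_erase.mp hx).1
    have h1 : (S₀.erase I.val).card ≤ (T.biUnion (t₂ I.val)).card := Finset.card_le_card hback
    have h2 : (S₀.erase I.val).card + 1 = k := Finset.card_erase_add_one I.2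
    have hBT𝒦 : ∀ c ∈ I.val, Bc P A c ∈ 𝒦 := by
      intro c hc
      by_cases h : Bc P A c = J
      · rw [h𝒦, h]; exact Finset.mem_insert_self _ _
      · rw [h𝒦]
        refine Finset.mem_insert_of_mem (Finset.mem_biUnion.mpr ⟨I.val, I.2, ?_⟩)
        rw [ht₁]
        exact Finset.mem_sdiff.mpr ⟨Finset.mem_image_of_mem _ hc,
          by rw [Finset.mem_singleton]; exact h⟩
    have hIim : (I.val.image (Bc P A)).card = I.val.card :=
      Finset.card_image_of_injOn (fun c hc d hd h => injB hP hns hpart hIA hc hd h)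
    have hIimsub : I.val.image (Bc P A) ⊆ 𝒦 := by
      intro K hK
      obtain ⟨c, hc, rfl⟩ := Finset.mem_image.mp hK
      exact hBT𝒦 c hc
    have hIle : I.val.card ≤ k := by
      have := Finset.card_le_card hIimsub
      rw [hIim, h𝒦card] at this
      exact this
    have hTim : (T.image (Bc P A)).card = T.card :=
      Finset.card_image_of_injOn
        (fun c hc d hd h => injB hP hns hpart hIA (hTsub hc) (hTsub hd) h)
    have hTge : k ≤ T.card := by omega
    have hTcard : T.card = k := by
      have h3 := Finset.card_le_card hTsub
      omega
    have hIcard : I.val.card = k := by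
      have h3 := Finset.card_le_card hTsub
      omega
    have hTeq : T = I.val := Finset.eq_of_subset_of_card_le hTsub (by omega)
    have hIB : I.val.image (Bc P A) = 𝒦 :=
      Finset.eq_of_subset_of_card_le hIimsub (by rw [hIim, h𝒦card, hIcard])
    refine ⟨hIcard, hIB, ?_⟩
    intro c hc dd hdd
    by_cases h : Ac A dd = I.val
    · rw [h]; exact I.2
    · refine hMsub (Finset.mem_biUnion.mpr ⟨c, hTeq ▸ hc, ?_⟩)
      rw [ht₂]
      exact Finset.mem_sdiff.mpr ⟨Finset.mem_image.mpr ⟨dd, hdd, rfl⟩,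
        by rw [Finset.mem_singleton]; exact h⟩
  -- orientation : members of S₀ are vertical, members of 𝒦 are horizontal
  have hIV : ∀ I : {I // I ∈ S₀}, IsMaxVInterval P I.val := by
    intro I
    have hxJ : I.val ∈ J.image (Ac A) := himageJ ▸ I.2
    obtain ⟨c, hcJ, hAc⟩ := Finset.mem_image.mp hxJ
    have hcP : c ∈ P := hJP hcJ
    have hJH : J = Hc P c := maxH_eq_Hc hJ hcJ
    rcases AB_pair hP hns hpart hcP with ⟨h1, -⟩ | ⟨h1, -⟩
    · exfalso
      apply hJA
      have : I.val = J := by rw [← hAc, h1, ← hJH]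
      rw [← this]
      exact hS₀A I.2
    · have : I.val = Vc P c := by rw [← hAc, h1]
      rw [this]
      exact (Vc_spec hcP).1
  have hKH : ∀ K ∈ 𝒦, IsMaxHInterval P K ∧ K ∉ A := by
    intro K hK
    rw [h𝒦, Finset.mem_insert] at hK
    rcases hK with rfl | hKW
    · exact ⟨hJ, hJA⟩
    · obtain ⟨I, hIS, hKt⟩ := Finset.mem_biUnion.mp hKW
      rw [ht₁, Finset.mem_sdiff] at hKt
      obtain ⟨c, hcI, hBc⟩ := Finset.mem_image.mp hKt.1
      have hcP : c ∈ P := hmemP I hIS hcI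
      have hIVc : I = Vc P c := maxV_eq_Vc (hIV ⟨I, hIS⟩) hcI
      have hAcI : Ac A c = I := (Ac_unique hpart (hS₀A hIS) hcI).symm
      rcases AB_pair hP hns hpart hcP with ⟨h1, -⟩ | ⟨-, h2⟩
      · exfalso
        exact Hc_ne_Vc hP hns hcP (by rw [← h1, hAcI, hIVc])
      · refine ⟨?_, by rw [← hBc]; exact (Bc_spec hP hns hpart hcP).2.2.1⟩
        rw [← hBc, h2]
        exact (Hc_spec hcP).1
  -- coordinates
  have hVco : ∀ I : {I // I ∈ S₀}, ∃ x v w : ℤ, v ≤ w ∧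
      I.val = (Finset.Icc v w).image (fun y => (x, y)) := by
    intro I
    obtain ⟨x, v, w, hvw, heq⟩ := (hIV I).1
    exact ⟨x, v, w, hvw, heq⟩
  choose xI vI wI hvw hIeq using hVco
  have hHco : ∀ K : {K // K ∈ 𝒦}, ∃ y a b : ℤ, a ≤ b ∧
      K.val = (Finset.Icc a b).image (fun x => (x, y)) := by
    intro K
    obtain ⟨y, a, b, hab, heq⟩ := (hKH K.val K.2).1.1
    exact ⟨y, a, b, hab, heq⟩
  choose yK aK bK hab hKeq using hHco
  -- every member of S₀ meets every member of 𝒦, in the obvious cell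
  have hmeet : ∀ (I : {I // I ∈ S₀}) (K : {K // K ∈ 𝒦}),
      (xI I, yK K) ∈ I.val ∧ (xI I, yK K) ∈ K.val := by
    intro I K
    have hK : K.val ∈ I.val.image (Bc P A) := by rw [(round2 I).2.1]; exact K.2
    obtain ⟨c, hcI, hBc⟩ := Finset.mem_image.mp hK
    have hcP : c ∈ P := hmemP I.val I.2 hcI
    have hcK : c ∈ K.val := by rw [← hBc]; exact (Bc_spec hP hns hpart hcP).2.1
    have h1 : c.1 = xI I := by
      have := hIeq I ▸ hcI
      exact (mem_vseg.mp this).2.2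
    have h2 : c.2 = yK K := by
      have := hKeq K ▸ hcK
      exact (mem_hseg.mp this).2.2
    have : c = (xI I, yK K) := Prod.ext h1 h2
    exact ⟨this ▸ hcI, this ▸ hcK⟩
  -- the rows are distinct, the columns are distinct
  have hyinj : Function.Injective yK := by
    intro K K' h
    have h1 := (hmeet Is₀ K).2
    have h2 := (hmeet Is₀ K').2
    rw [← h] at h2
    exact Subtype.ext (maxH_unique (hKH K.val K.2).1 (hKH K'.val K'.2).1 h1 h2)
  have hxinj : Function.Injective xI := by
    intro I I' h
    set KJ : {K // K ∈ 𝒦} := ⟨J, by rw [h𝒦]; exact Finset.mem_insert_self _ _⟩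
    have h1 := (hmeet I KJ).1
    have h2 := (hmeet I' KJ).1
    rw [← h] at h2
    apply Subtype.ext
    by_contra hne
    exact Finset.disjoint_left.mp
      (hpart.2.1 I.val (hS₀A I.2) I'.val (hS₀A I'.2) hne) h1 h2
  set Y : Finset ℤ := Finset.univ.image yK with hY
  set X : Finset ℤ := Finset.univ.image xI with hX
  have hYcard : Y.card = k := by
    rw [hY, Finset.card_image_of_injective _ hyinj, Finset.card_univ, Fintype.card_coe, h𝒦card]
  have hXcard : X.card = k := by
    rw [hX, Finset.card_image_of_injective _ hxinj, Finset.card_univ, Fintype.card_coe, hk]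
  have hYI : ∀ I : {I // I ∈ S₀}, Y = Finset.Icc (vI I) (wI I) := by
    intro I
    have hsub : Y ⊆ Finset.Icc (vI I) (wI I) := by
      intro y hy
      rw [hY] at hy
      obtain ⟨K, -, rfl⟩ := Finset.mem_image.mp hy
      have := hIeq I ▸ (hmeet I K).1
      have hb := mem_vseg.mp this
      exact Finset.mem_Icc.mpr ⟨hb.1, hb.2.1⟩
    have hIccCard : (Finset.Icc (vI I) (wI I)).card = k := by
      have h1 : I.val.card = (Finset.Icc (vI I) (wI I)).card := by
        rw [hIeq I]
        exact Finset.card_image_of_injective _ (fun a b hh => (Prod.ext_iff.mp hh).2)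
      rw [← h1]
      exact (round2 I).1
    exact Finset.eq_of_subset_of_card_le hsub (by omega)
  have hXK : ∀ K : {K // K ∈ 𝒦}, X = Finset.Icc (aK K) (bK K) := by
    intro K
    have hsub : X ⊆ Finset.Icc (aK K) (bK K) := by
      intro x hx
      rw [hX] at hx
      obtain ⟨I, -, rfl⟩ := Finset.mem_image.mp hx
      have := hKeq K ▸ (hmeet I K).2
      have hb := mem_hseg.mp this
      exact Finset.mem_Icc.mpr ⟨hb.1, hb.2.1⟩
    -- the cardinality of K is k
    have hKA : (K.val.image (Ac A)).card = K.val.card :=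
      Finset.card_image_of_injOn
        (fun c hc d hd h => injA hpart (Or.inl (hKH K.val K.2).1) (hKH K.val K.2).2 hc hd h)
    have hKimg : K.val.image (Ac A) = S₀ := by
      apply Finset.Subset.antisymm
      · intro x hx
        obtain ⟨dd, hdd, rfl⟩ := Finset.mem_image.mp hx
        -- K.val = Bc of some c in Is₀
        have hK : K.val ∈ Is₀.val.image (Bc P A) := by rw [(round2 Is₀).2.1]; exact K.2
        obtain ⟨c, hcI, hBc⟩ := Finset.mem_image.mp hK
        exact (round2 Is₀).2.2 c hcI dd (by rw [hBc]; exact hdd)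
      · intro I hI
        have h1 := (hmeet ⟨I, hI⟩ K).1
        have h2 := (hmeet ⟨I, hI⟩ K).2
        exact Finset.mem_image.mpr ⟨_, h2, (Ac_unique hpart (hS₀A hI) h1).symm⟩
    have hKcard : K.val.card = k := by
      rw [← hKA, hKimg, hk]
    have hIccCard : (Finset.Icc (aK K) (bK K)).card = k := by
      have h1 : K.val.card = (Finset.Icc (aK K) (bK K)).card := by
        rw [hKeq K]
        exact Finset.card_image_of_injective _ (fun a b hh => (Prod.ext_iff.mp hh).1)
      omega
    exact Finset.eq_of_subset_of_card_le hsub (by omega)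
  -- P is exactly the block X ×ˢ Y
  set Q : Finset Cell := X ×ˢ Y with hQ
  have hIQ : ∀ I : {I // I ∈ S₀}, I.val ⊆ Q := by
    intro I c hc
    have hcv := mem_vseg.mp (hIeq I ▸ hc)
    rw [hQ, Finset.mem_product]
    constructor
    · rw [hX, hcv.2.2]
      exact Finset.mem_image_of_mem _ (Finset.mem_univ I)
    · rw [hYI I]
      exact Finset.mem_Icc.mpr ⟨hcv.1, hcv.2.1⟩
  have hQP : Q ⊆ P := by
    intro c hc
    rw [hQ, Finset.mem_product] at hc
    rw [hX] at hc
    obtain ⟨I, -, hxc⟩ := Finset.mem_image.mp hc.1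
    have hcY : c.2 ∈ Finset.Icc (vI I) (wI I) := by rw [← hYI I]; exact hc.2
    have hcI : c ∈ I.val := by
      rw [hIeq I, mem_vseg]
      rw [Finset.mem_Icc] at hcY
      exact ⟨hcY.1, hcY.2, hxc.symm⟩
    exact hmemP I.val I.2 hcI
  have hPQ : P ⊆ Q := by
    by_contra hnsub
    obtain ⟨p, hpP, hpQ⟩ := Finset.not_subset.mp hnsub
    set KJ : {K // K ∈ 𝒦} := ⟨J, by rw [h𝒦]; exact Finset.mem_insert_self _ _⟩ with hKJ
    have hq₀Q : (xI Is₀, yK KJ) ∈ Q := hIQ Is₀ (hmeet Is₀ KJ).1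
    have hq₀P : (xI Is₀, yK KJ) ∈ P := hQP hq₀Q
    obtain ⟨u, v, ⟨hadj, huP, hvP⟩, huQ, hvQ⟩ :=
      crossing (hP.2 _ hq₀P p hpP) hq₀Q hpQ
    rw [hQ, Finset.mem_product] at huQ
    obtain ⟨I, -, hxu⟩ := Finset.mem_image.mp (hX ▸ huQ.1)
    obtain ⟨K, -, hyu⟩ := Finset.mem_image.mp (hY ▸ huQ.2)
    have huI : u ∈ I.val := by
      rw [hIeq I, mem_vseg]
      have : u.2 ∈ Finset.Icc (vI I) (wI I) := by rw [← hYI I]; exact huQ.2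
      rw [Finset.mem_Icc] at this
      exact ⟨this.1, this.2, hxu.symm⟩
    have huK : u ∈ K.val := by
      rw [hKeq K, mem_hseg]
      have : u.1 ∈ Finset.Icc (aK K) (bK K) := by rw [← hXK K]; exact huQ.1
      rw [Finset.mem_Icc] at this
      exact ⟨this.1, this.2, hyu.symm⟩
    rcases hadj with ⟨h1, h2⟩ | ⟨h1, h2⟩
    · -- vertical neighbour : extend the vertical interval I
      have hvX : v.1 ∈ X := by rw [← h1, ← hxu, hX]; exact Finset.mem_image_of_mem _ (Finset.mem_univ I)
      have hvY : v.2 ∉ Finset.Icc (vI I) (wI I) := by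
        intro hmem
        apply hvQ
        rw [hQ, Finset.mem_product]
        exact ⟨hvX, by rw [hYI I]; exact hmem⟩
      have hu2 : vI I ≤ u.2 ∧ u.2 ≤ wI I := by
        have := mem_vseg.mp (hIeq I ▸ huI)
        exact ⟨this.1, this.2.1⟩
      rw [Finset.mem_Icc] at hvY
      push_neg at hvY
      -- the extended segment
      set S : Finset Cell :=
        (Finset.Icc (min (vI I) v.2) (max (wI I) v.2)).image (fun y => (xI I, y)) with hS
      have hSseg : IsVSeg S := ⟨xI I, _, _, by omega, rfl⟩
      have hSP : S ⊆ P := by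
        intro e he
        rw [hS, mem_vseg] at he
        by_cases hin : vI I ≤ e.2 ∧ e.2 ≤ wI I
        · have : e ∈ I.val := by
            rw [hIeq I, mem_vseg]
            exact ⟨hin.1, hin.2, he.2.2⟩
          exact hmemP I.val I.2 this
        · have he2 : e.2 = v.2 := by omega
          have hev : e = v := by
            refine Prod.ext ?_ he2
            rw [he.2.2, hxu]
            exact h1
          rw [hev]
          exact hvP
      have hIS : I.val ⊆ S := by
        intro e he
        have := mem_vseg.mp (hIeq I ▸ he)
        rw [hS, mem_vseg]
        exact ⟨by omega, by omega, this.2.2⟩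
      have hSI := (hIV I).2.2 S hSseg hSP hIS
      have hvS : v ∈ S := by
        rw [hS, mem_vseg]
        refine ⟨by omega, by omega, ?_⟩
        rw [← h1]
        exact hxu.symm
      rw [hSI] at hvS
      have : v ∈ Q := hIQ I hvS
      exact hvQ this
    · -- horizontal neighbour : extend the horizontal interval K
      have hvY : v.2 ∈ Y := by rw [← h1, ← hyu, hY]; exact Finset.mem_image_of_mem _ (Finset.mem_univ K)
      have hvX : v.1 ∉ Finset.Icc (aK K) (bK K) := by
        intro hmem
        apply hvQ
        rw [hQ, Finset.mem_product]
        exact ⟨by rw [hXK K]; exact hmem, hvY⟩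
      have hu1 : aK K ≤ u.1 ∧ u.1 ≤ bK K := by
        have := mem_hseg.mp (hKeq K ▸ huK)
        exact ⟨this.1, this.2.1⟩
      rw [Finset.mem_Icc] at hvX
      push_neg at hvX
      set S : Finset Cell :=
        (Finset.Icc (min (aK K) v.1) (max (bK K) v.1)).image (fun x => (x, yK K)) with hS
      have hSseg : IsHSeg S := ⟨yK K, _, _, by omega, rfl⟩
      have hSP : S ⊆ P := by
        intro e he
        rw [hS, mem_hseg] at he
        by_cases hin : aK K ≤ e.1 ∧ e.1 ≤ bK K
        · have : e ∈ K.val := by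
            rw [hKeq K, mem_hseg]
            exact ⟨hin.1, hin.2, he.2.2⟩
          exact (hKH K.val K.2).1.2.1 this
        · have he1 : e.1 = v.1 := by omega
          have hev : e = v := by
            refine Prod.ext he1 ?_
            rw [he.2.2, hyu]
            exact h1
          rw [hev]
          exact hvP
      have hKS : K.val ⊆ S := by
        intro e he
        have := mem_hseg.mp (hKeq K ▸ he)
        rw [hS, mem_hseg]
        exact ⟨by omega, by omega, this.2.2⟩
      have hSK := (hKH K.val K.2).1.2.2 S hSseg hSP hKS
      have hvS : v ∈ S := by
        rw [hS, mem_hseg]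
        refine ⟨by omega, by omega, ?_⟩
        rw [← h1]
        exact hyu.symm
      rw [hSK] at hvS
      -- v is in K.val hence in Q
      apply hvQ
      rw [hQ, Finset.mem_product]
      have := mem_hseg.mp (hKeq K ▸ hvS)
      refine ⟨by rw [hXK K]; exact Finset.mem_Icc.mpr ⟨this.1, this.2.1⟩, ?_⟩
      rw [← h1, ← hyu, hY]
      exact Finset.mem_image_of_mem _ (Finset.mem_univ K)
  have hPeq : P = Q := Finset.Subset.antisymm hPQ hQP
  -- P is a square block : contradiction
  apply hns
  set KJ : {K // K ∈ 𝒦} := ⟨J, by rw [h𝒦]; exact Finset.mem_insert_self _ _⟩ with hKJ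
  have hXIcc : X = Finset.Icc (aK KJ) (bK KJ) := hXK KJ
  have hYIcc : Y = Finset.Icc (vI Is₀) (wI Is₀) := hYI Is₀
  have hbK : bK KJ = aK KJ + (k : ℤ) - 1 := by
    have h1 : (Finset.Icc (aK KJ) (bK KJ)).card = k := by rw [← hXIcc]; exact hXcard
    rw [Int.card_Icc] at h1
    have := hab KJ
    omega
  have hwI : wI Is₀ = vI Is₀ + (k : ℤ) - 1 := by
    have h1 : (Finset.Icc (vI Is₀) (wI Is₀)).card = k := by rw [← hYIcc]; exact hYcard
    rw [Int.card_Icc] at h1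
    have := hvw Is₀
    omega
  refine ⟨aK KJ, vI Is₀, (k : ℤ), by exact_mod_cast Nat.one_le_iff_ne_zero.mpr (by omega), ?_⟩
  rw [hPeq, hQ, hXIcc, hYIcc, hbK, hwI]

lemma swap_image_swap (S : Finset Cell) : (S.image Prod.swap).image Prod.swap = S := by
  rw [Finset.image_image]
  have : (Prod.swap ∘ Prod.swap : Cell → Cell) = id := by
    funext p; simp
  rw [this, Finset.image_id]

lemma swap_inj : Function.Injective (Prod.swap : Cell → Cell) :=
  fun a b h => by
    have := congrArg Prod.swap h
    simpa using this

lemma t_hseg {S : Finset Cell} (h : IsHSeg S) : IsVSeg (S.image Prod.swap) := by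
  obtain ⟨y, a, b, hab, rfl⟩ := h
  refine ⟨y, a, b, hab, ?_⟩
  rw [Finset.image_image]
  rfl

lemma t_vseg {S : Finset Cell} (h : IsVSeg S) : IsHSeg (S.image Prod.swap) := by
  obtain ⟨x, a, b, hab, rfl⟩ := h
  refine ⟨x, a, b, hab, ?_⟩
  rw [Finset.image_image]
  rfl

lemma t_maxV {P I : Finset Cell} (h : IsMaxVInterval P I) :
    IsMaxHInterval (P.image Prod.swap) (I.image Prod.swap) := by
  refine ⟨t_vseg h.1, Finset.image_subset_image h.2.1, ?_⟩
  intro I'' hseg hsub hsup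
  have h1 : IsVSeg (I''.image Prod.swap) := t_hseg hseg
  have h2 : I''.image Prod.swap ⊆ P := by
    have := Finset.image_subset_image (f := Prod.swap) hsub
    rwa [swap_image_swap] at this
  have h3 : I ⊆ I''.image Prod.swap := by
    have := Finset.image_subset_image (f := Prod.swap) hsup
    rwa [swap_image_swap] at this
  have h4 := h.2.2 _ h1 h2 h3
  have := congrArg (fun S => Finset.image Prod.swap S) h4
  simpa [swap_image_swap] using this

lemma t_maxH {P I : Finset Cell} (h : IsMaxHInterval P I) :
    IsMaxVInterval (P.image Prod.swap) (I.image Prod.swap) := by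
  refine ⟨t_hseg h.1, Finset.image_subset_image h.2.1, ?_⟩
  intro I'' hseg hsub hsup
  have h1 : IsHSeg (I''.image Prod.swap) := t_vseg hseg
  have h2 : I''.image Prod.swap ⊆ P := by
    have := Finset.image_subset_image (f := Prod.swap) hsub
    rwa [swap_image_swap] at this
  have h3 : I ⊆ I''.image Prod.swap := by
    have := Finset.image_subset_image (f := Prod.swap) hsup
    rwa [swap_image_swap] at this
  have h4 := h.2.2 _ h1 h2 h3
  have := congrArg (fun S => Finset.image Prod.swap S) h4
  simpa [swap_image_swap] using this

lemma t_max {P I : Finset Cell} (h : IsMaxInterval P I) :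
    IsMaxInterval (P.image Prod.swap) (I.image Prod.swap) := by
  rcases h with h | h
  · exact Or.inr (t_maxH h)
  · exact Or.inl (t_maxV h)

lemma t_attacks {P : Finset Cell} {c d : Cell} (h : Attacks P c d) :
    Attacks (P.image Prod.swap) c.swap d.swap := by
  obtain ⟨hne, I, hI, hc, hd⟩ := h
  exact ⟨fun hh => hne (swap_inj hh), I.image Prod.swap, t_max hI,
    Finset.mem_image_of_mem _ hc, Finset.mem_image_of_mem _ hd⟩

lemma embedded_back {P X : Finset Cell}
    (h : IsEmbedded (P.image Prod.swap) (X.image Prod.swap)) : IsEmbedded P X := by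
  obtain ⟨F, ⟨hFP, hFatk⟩, hFX, hcov⟩ := h
  refine ⟨F.image Prod.swap, ⟨?_, ?_⟩, ?_, ?_⟩
  · intro x hx
    obtain ⟨f, hf, rfl⟩ := Finset.mem_image.mp hx
    obtain ⟨g, hg, hgf⟩ := Finset.mem_image.mp (hFP hf)
    rw [← hgf]
    simpa using hg
  · intro x hx y hy hatk
    obtain ⟨f, hf, rfl⟩ := Finset.mem_image.mp hx
    obtain ⟨g, hg, rfl⟩ := Finset.mem_image.mp hy
    have := t_attacks hatk
    simp only [Prod.swap_swap] at this
    exact hFatk f hf g hg this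
  · rw [Finset.eq_empty_iff_forall_notMem]
    intro z hz
    rw [Finset.mem_inter] at hz
    obtain ⟨f, hf, rfl⟩ := Finset.mem_image.mp hz.1
    have : f ∈ F ∩ X.image Prod.swap := by
      rw [Finset.mem_inter]
      constructor
      · exact hf
      · have := Finset.mem_image_of_mem Prod.swap hz.2
        simpa using this
    rw [hFX] at this
    exact absurd this (Finset.notMem_empty f)
  · intro c hc
    obtain ⟨f, hf, hatk⟩ := hcov c.swap (Finset.mem_image_of_mem _ hc)
    refine ⟨f.swap, Finset.mem_image_of_mem _ hf, ?_⟩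
    have := t_attacks hatk
    rw [swap_image_swap] at this
    simpa using this

lemma t_adj {c d : Cell} (h : Adjacent c d) : Adjacent c.swap d.swap := by
  rcases h with ⟨h1, h2⟩ | ⟨h1, h2⟩
  · exact Or.inr ⟨h1, h2⟩
  · exact Or.inl ⟨h1, h2⟩

lemma t_poly {P : Finset Cell} (h : IsPolyomino P) : IsPolyomino (P.image Prod.swap) := by
  refine ⟨h.1.image _, ?_⟩
  intro c hc d hd
  obtain ⟨c₀, hc₀, rfl⟩ := Finset.mem_image.mp hc
  obtain ⟨d₀, hd₀, rfl⟩ := Finset.mem_image.mp hd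
  refine Relation.ReflTransGen.lift Prod.swap ?_ _ _ (h.2 c₀ hc₀ d₀ hd₀)
  rintro a b ⟨hab, haP, hbP⟩
  exact ⟨t_adj hab, Finset.mem_image_of_mem _ haP, Finset.mem_image_of_mem _ hbP⟩

lemma swap_product (s t : Finset ℤ) :
    (s ×ˢ t).image Prod.swap = t ×ˢ s := by
  ext ⟨x, y⟩
  simp only [Finset.mem_image, Finset.mem_product, Prod.exists, Prod.swap_prod_mk,
    Prod.mk.injEq]
  constructor
  · rintro ⟨a, b, ⟨ha, hb⟩, rfl, rfl⟩
    exact ⟨hb, ha⟩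
  · rintro ⟨hx, hy⟩
    exact ⟨y, x, ⟨hy, hx⟩, rfl, rfl⟩

lemma t_sq {P : Finset Cell} (h : IsSquareBlock (P.image Prod.swap)) : IsSquareBlock P := by
  obtain ⟨a, b, n, hn, heq⟩ := h
  refine ⟨b, a, n, hn, ?_⟩
  have := congrArg (fun S => Finset.image Prod.swap S) heq
  rw [swap_image_swap, swap_product] at this
  exact this

lemma t_super {P : Finset Cell} {A : Finset (Finset Cell)} (hA : IsSuperPartition P A) :
    IsSuperPartition (P.image Prod.swap) (A.image (fun I => I.image Prod.swap)) := by
  classical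
  have himg_inj : Function.Injective (fun I : Finset Cell => I.image Prod.swap) :=
    Finset.image_injective swap_inj
  refine ⟨⟨?_, ?_, ?_⟩, ?_⟩
  · intro I' hI'
    obtain ⟨I, hI, rfl⟩ := Finset.mem_image.mp hI'
    exact t_max (hA.1.1 I hI)
  · intro I' hI' J' hJ' hne
    obtain ⟨I, hI, rfl⟩ := Finset.mem_image.mp hI'
    obtain ⟨J₂, hJ₂, rfl⟩ := Finset.mem_image.mp hJ'
    have : I ≠ J₂ := fun hh => hne (by rw [hh])
    exact (Finset.disjoint_image swap_inj).mpr (hA.1.2.1 I hI J₂ hJ₂ this)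
  · rw [Finset.image_biUnion]
    have : (A.biUnion fun I => (id I).image Prod.swap) = (A.biUnion id).image Prod.swap :=
      Finset.biUnion_image.symm
    simp only [id] at this ⊢
    rw [this, hA.1.2.2]
  · intro I' hI' hemb
    obtain ⟨I, hI, rfl⟩ := Finset.mem_image.mp hI'
    exact hA.2 I hI (embedded_back hemb)


/-- If `P` is not a square and `A` is a super partition of `P`, then every
maximal cell interval not belonging to `A` is embedded. -/
theorem statement1 (P : Finset Cell) (hP : IsPolyomino P) (hns : ¬ IsSquareBlock P)
    (A : Finset (Finset Cell)) (hA : IsSuperPartition P A)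
    (J : Finset Cell) (hJ : IsMaxInterval P J) (hJA : J ∉ A) :
    IsEmbedded P J := by
  classical
  rcases hJ with hJh | hJv
  · exact main_h hP hns hA hJh hJA
  · apply embedded_back
    have hJA' : J.image Prod.swap ∉ A.image (fun I => I.image Prod.swap) := by
      intro hmem
      obtain ⟨I, hI, hIeq⟩ := Finset.mem_image.mp hmem
      have : I = J := Finset.image_injective swap_inj hIeq
      exact hJA (this ▸ hI)
    exact main_h (t_poly hP) (fun h => hns (t_sq h)) (t_super hA) (t_maxV hJv) hJA'
end

section
/- Let P be a polyomino and let I, I' be distinct, disjoint maximal cell intervals of P such that I is embedded and such that there exists a maximal cell interval J of P, distinct from I and I', with J ∩ I ≠ ∅ and J ∩ I' ≠ ∅. Then there exists a set F of pairwise non-attacking cells of P with F ∩ I = ∅, such that every cell of I is attacked by some cell of F, and moreover F ∩ I' ≠ ∅. -/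
lemma maxH_unique_s2 {P S T : Finset Cell} (hS : IsMaxHInterval P S)
    (hT : IsMaxHInterval P T) {c : Cell} (hcS : c ∈ S) (hcT : c ∈ T) : S = T := by
  obtain ⟨hSseg, hSP, hSmax⟩ := hS
  obtain ⟨hTseg, hTP, hTmax⟩ := hT
  obtain ⟨y, a, b, hab, rfl⟩ := hSseg
  obtain ⟨y', a', b', hab', rfl⟩ := hTseg
  simp only [Finset.mem_image, Finset.mem_Icc] at hcS hcT
  obtain ⟨x, hx, hxe⟩ := hcS
  obtain ⟨x', hx', hxe'⟩ := hcT
  subst hxe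
  have hy : y = y' := by simpa using (congrArg Prod.snd hxe').symm
  have hx2 : x = x' := by simpa using (congrArg Prod.fst hxe').symm
  subst hy; subst hx2
  set U : Finset Cell := (Finset.Icc (min a a') (max b b')).image (fun t => (t, y)) with hU
  have hUseg : IsHSeg U := ⟨y, min a a', max b b', by omega, rfl⟩
  have hUP : U ⊆ P := by
    intro d hd
    simp only [hU, Finset.mem_image, Finset.mem_Icc] at hd
    obtain ⟨t, ht, rfl⟩ := hd
    by_cases h : a ≤ t ∧ t ≤ b
    · exact hSP (by simp only [Finset.mem_image, Finset.mem_Icc]; exact ⟨t, h, rfl⟩)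
    · exact hTP (by simp only [Finset.mem_image, Finset.mem_Icc]; exact ⟨t, by omega, rfl⟩)
  have hSU : (Finset.Icc a b).image (fun x => ((x : ℤ), y)) ⊆ U :=
    Finset.image_subset_image (Finset.Icc_subset_Icc (min_le_left _ _) (le_max_left _ _))
  have hTU : (Finset.Icc a' b').image (fun x => ((x : ℤ), y)) ⊆ U :=
    Finset.image_subset_image (Finset.Icc_subset_Icc (min_le_right _ _) (le_max_right _ _))
  rw [← hSmax U hUseg hUP hSU, ← hTmax U hUseg hUP hTU]

lemma maxV_unique_s2 {P S T : Finset Cell} (hS : IsMaxVInterval P S)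
    (hT : IsMaxVInterval P T) {c : Cell} (hcS : c ∈ S) (hcT : c ∈ T) : S = T := by
  obtain ⟨hSseg, hSP, hSmax⟩ := hS
  obtain ⟨hTseg, hTP, hTmax⟩ := hT
  obtain ⟨x, a, b, hab, rfl⟩ := hSseg
  obtain ⟨x', a', b', hab', rfl⟩ := hTseg
  simp only [Finset.mem_image, Finset.mem_Icc] at hcS hcT
  obtain ⟨z, hz, hze⟩ := hcS
  obtain ⟨z', hz', hze'⟩ := hcT
  subst hze
  have hy : x = x' := by simpa using (congrArg Prod.fst hze').symm
  have hx2 : z = z' := by simpa using (congrArg Prod.snd hze').symm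
  subst hy; subst hx2
  set U : Finset Cell := (Finset.Icc (min a a') (max b b')).image (fun t => (x, t)) with hU
  have hUseg : IsVSeg U := ⟨x, min a a', max b b', by omega, rfl⟩
  have hUP : U ⊆ P := by
    intro d hd
    simp only [hU, Finset.mem_image, Finset.mem_Icc] at hd
    obtain ⟨t, ht, rfl⟩ := hd
    by_cases h : a ≤ t ∧ t ≤ b
    · exact hSP (by simp only [Finset.mem_image, Finset.mem_Icc]; exact ⟨t, h, rfl⟩)
    · exact hTP (by simp only [Finset.mem_image, Finset.mem_Icc]; exact ⟨t, by omega, rfl⟩)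
  have hSU : (Finset.Icc a b).image (fun t => (x, (t : ℤ))) ⊆ U :=
    Finset.image_subset_image (Finset.Icc_subset_Icc (min_le_left _ _) (le_max_left _ _))
  have hTU : (Finset.Icc a' b').image (fun t => (x, (t : ℤ))) ⊆ U :=
    Finset.image_subset_image (Finset.Icc_subset_Icc (min_le_right _ _) (le_max_right _ _))
  rw [← hSmax U hUseg hUP hSU, ← hTmax U hUseg hUP hTU]

/-- If `I` is embedded and some maximal interval `J` meets both `I` and `I'`,
then `I` has an embedding meeting `I'`. -/
theorem statement2 (P : Finset Cell) (hP : IsPolyomino P)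
    (I I' : Finset Cell) (hI : IsMaxInterval P I) (hI' : IsMaxInterval P I')
    (hne : I ≠ I') (hdisj : Disjoint I I') (hemb : IsEmbedded P I)
    (J : Finset Cell) (hJ : IsMaxInterval P J) (hJI : J ≠ I) (hJI' : J ≠ I')
    (h1 : (J ∩ I).Nonempty) (h2 : (J ∩ I').Nonempty) :
    ∃ F : Finset Cell, IsRookSet P F ∧ F ∩ I = ∅ ∧
      (∀ c ∈ I, ∃ f ∈ F, Attacks P f c) ∧ (F ∩ I').Nonempty := by
  obtain ⟨F, hF, hFI, hFatt⟩ := hemb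
  by_cases hcase : (F ∩ I').Nonempty
  · exact ⟨F, hF, hFI, hFatt, hcase⟩
  have hFI' : ∀ x ∈ F, x ∉ I' := fun x hx hx' =>
    hcase ⟨x, Finset.mem_inter.mpr ⟨hx, hx'⟩⟩
  have hFInI : ∀ x ∈ F, x ∉ I := fun x hx hx' =>
    (Finset.eq_empty_iff_forall_notMem.mp hFI x) (Finset.mem_inter.mpr ⟨hx, hx'⟩)
  obtain ⟨j, hjmem⟩ := h2
  rw [Finset.mem_inter] at hjmem
  obtain ⟨hjJ, hjI'⟩ := hjmem
  obtain ⟨c1, hc1⟩ := h1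
  rw [Finset.mem_inter] at hc1
  have orient : (IsMaxHInterval P J ∧ IsMaxVInterval P I ∧ IsMaxVInterval P I') ∨
      (IsMaxVInterval P J ∧ IsMaxHInterval P I ∧ IsMaxHInterval P I') := by
    rcases hJ with hJh | hJv
    · refine Or.inl ⟨hJh, ?_, ?_⟩
      · rcases hI with hIh | hIv
        · exact absurd (maxH_unique_s2 hJh hIh hc1.1 hc1.2) hJI
        · exact hIv
      · rcases hI' with hIh | hIv
        · exact absurd (maxH_unique_s2 hJh hIh hjJ hjI') hJI'
        · exact hIv
    · refine Or.inr ⟨hJv, ?_, ?_⟩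
      · rcases hI with hIh | hIv
        · exact hIh
        · exact absurd (maxV_unique_s2 hJv hIv hc1.1 hc1.2) hJI
      · rcases hI' with hIh | hIv
        · exact hIh
        · exact absurd (maxV_unique_s2 hJv hIv hjJ hjI') hJI'
  have keyA : ∀ K, IsMaxInterval P K → ∀ u ∈ K, u ∈ I → ∀ v ∈ K, v ∈ J → K = I ∨ K = J := by
    intro K hK u huK huI v hvK hvJ
    rcases orient with ⟨hJh, hIv, _⟩ | ⟨hJv, hIh, _⟩
    · rcases hK with hKh | hKv
      · exact Or.inr (maxH_unique_s2 hKh hJh hvK hvJ)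
      · exact Or.inl (maxV_unique_s2 hKv hIv huK huI)
    · rcases hK with hKh | hKv
      · exact Or.inl (maxH_unique_s2 hKh hIh huK huI)
      · exact Or.inr (maxV_unique_s2 hKv hJv hvK hvJ)
  have keyB : ∀ K, IsMaxInterval P K → j ∈ K → K = J ∨ K = I' := by
    intro K hK hjK
    rcases orient with ⟨hJh, _, hI'v⟩ | ⟨hJv, _, hI'h⟩
    · rcases hK with hKh | hKv
      · exact Or.inl (maxH_unique_s2 hKh hJh hjK hjJ)
      · exact Or.inr (maxV_unique_s2 hKv hI'v hjK hjI')
    · rcases hK with hKh | hKv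
      · exact Or.inr (maxH_unique_s2 hKh hI'h hjK hjI')
      · exact Or.inl (maxV_unique_s2 hKv hJv hjK hjJ)
  have hI'P : I' ⊆ P := by rcases hI' with h | h <;> exact h.2.1
  have hjP : j ∈ P := hI'P hjI'
  have hjI : j ∉ I := fun h => Finset.disjoint_left.mp hdisj h hjI'
  have hnoattj : ∀ f ∈ F, f ∉ J → ¬ Attacks P f j := by
    rintro f hfF hfJ ⟨hne, K, hK, hfK, hjK⟩
    rcases keyB K hK hjK with h | h
    · exact hfJ (h ▸ hfK)
    · exact hFI' f hfF (h ▸ hfK)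
  refine ⟨insert j (F.filter (fun x => x ∉ J)), ⟨?_, ?_⟩, ?_, ?_, ?_⟩
  · intro x hx
    rcases Finset.mem_insert.mp hx with rfl | hx
    · exact hjP
    · exact hF.1 (Finset.mem_filter.mp hx).1
  · intro a ha b hb hatt
    have hmem : ∀ x ∈ insert j (F.filter (fun x => x ∉ J)), x = j ∨ (x ∈ F ∧ x ∉ J) := by
      intro x hx
      rcases Finset.mem_insert.mp hx with h | h
      · exact Or.inl h
      · exact Or.inr (Finset.mem_filter.mp h)
    rcases hmem a ha with haj | ⟨haF, haJ⟩
    · rcases hmem b hb with hbj | ⟨hbF, hbJ⟩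
      · rw [haj, hbj] at hatt; exact hatt.1 rfl
      · rw [haj] at hatt
        exact hnoattj b hbF hbJ ⟨hatt.1.symm,
          by obtain ⟨_, K, hK, h1, h2⟩ := hatt; exact ⟨K, hK, h2, h1⟩⟩
    · rcases hmem b hb with hbj | ⟨hbF, hbJ⟩
      · rw [hbj] at hatt
        exact hnoattj a haF haJ hatt
      · exact hF.2 a haF b hbF hatt
  · rw [Finset.eq_empty_iff_forall_notMem]
    intro x hx
    rw [Finset.mem_inter, Finset.mem_insert] at hx
    rcases hx with ⟨hxj | hxF, hxI⟩
    · exact hjI (hxj ▸ hxI)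
    · exact hFInI x (Finset.mem_filter.mp hxF).1 hxI
  · intro c hc
    obtain ⟨f, hfF, hfatt⟩ := hFatt c hc
    by_cases hfJ : f ∈ J
    · obtain ⟨hne, K, hK, hfK, hcK⟩ := hfatt
      rcases keyA K hK c hcK hc f hfK hfJ with hKI | hKJ
      · exact absurd (hKI ▸ hfK) (hFInI f hfF)
      · refine ⟨j, Finset.mem_insert_self _ _, ?_, J, hJ, hjJ, hKJ ▸ hcK⟩
        intro h; exact hjI (h ▸ hc)
    · exact ⟨f, Finset.mem_insert_of_mem (Finset.mem_filter.mpr ⟨hfF, hfJ⟩), hfatt⟩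
  · exact ⟨j, Finset.mem_inter.mpr ⟨Finset.mem_insert_self _ _, hjI'⟩⟩
end

section
/- Let P be a polyomino and d ≥ 1 an integer. The rook complex ℛ(P) is pure of dimension d−1 (i.e., every maximal set of pairwise non-attacking cells of P has cardinality exactly d) if and only if P admits a super partition 𝔸 with |𝔸| = d. -/
namespace RookProof
open Finset

noncomputable def Hseg (y a b : ℤ) : Finset Cell := (Finset.Icc a b).image (fun x => (x, y))
noncomputable def Vseg (x a b : ℤ) : Finset Cell := (Finset.Icc a b).image (fun y => (x, y))

lemma mem_Hseg {y a b : ℤ} {p : Cell} : p ∈ Hseg y a b ↔ a ≤ p.1 ∧ p.1 ≤ b ∧ p.2 = y := by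
  simp only [Hseg, Finset.mem_image, Finset.mem_Icc]
  constructor
  · rintro ⟨x, ⟨h1, h2⟩, rfl⟩; exact ⟨h1, h2, rfl⟩
  · rintro ⟨h1, h2, h3⟩
    exact ⟨p.1, ⟨h1, h2⟩, by rw [← h3]⟩

lemma mem_Vseg {x a b : ℤ} {p : Cell} : p ∈ Vseg x a b ↔ a ≤ p.2 ∧ p.2 ≤ b ∧ p.1 = x := by
  simp only [Vseg, Finset.mem_image, Finset.mem_Icc]
  constructor
  · rintro ⟨y, ⟨h1, h2⟩, rfl⟩; exact ⟨h1, h2, rfl⟩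
  · rintro ⟨h1, h2, h3⟩
    exact ⟨p.2, ⟨h1, h2⟩, by rw [← h3]⟩

lemma isHSeg_iff {S : Finset Cell} : IsHSeg S ↔ ∃ y a b : ℤ, a ≤ b ∧ S = Hseg y a b :=
  Iff.rfl

lemma isVSeg_iff {S : Finset Cell} : IsVSeg S ↔ ∃ x a b : ℤ, a ≤ b ∧ S = Vseg x a b :=
  Iff.rfl

/-- existence of maximal horizontal interval through a cell -/
lemma exists_maxH {P : Finset Cell} {c : Cell} (hc : c ∈ P) :
    ∃ I, IsMaxHInterval P I ∧ c ∈ I := by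
  classical
  set L : Finset ℤ := (P.filter (fun d => d.2 = c.2)).image Prod.fst with hL
  have hmemL : ∀ t : ℤ, t ∈ L ↔ (t, c.2) ∈ P := by
    intro t
    simp only [hL, Finset.mem_image, Finset.mem_filter]
    constructor
    · rintro ⟨d, ⟨hd, hd2⟩, rfl⟩
      have : d = (d.1, c.2) := by rw [← hd2]
      rwa [← this]
    · intro h; exact ⟨(t, c.2), ⟨h, rfl⟩, rfl⟩
  have hc1 : c.1 ∈ L := by rw [hmemL]; simpa using hc
  set T : Finset ℤ := L.filter (fun a => a ≤ c.1 ∧ ∀ t ∈ Finset.Icc a c.1, t ∈ L) with hT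
  set U : Finset ℤ := L.filter (fun b => c.1 ≤ b ∧ ∀ t ∈ Finset.Icc c.1 b, t ∈ L) with hU
  have hTne : T.Nonempty := ⟨c.1, by
    simp only [hT, Finset.mem_filter]
    refine ⟨hc1, le_refl _, ?_⟩
    intro t ht
    simp only [Finset.mem_Icc] at ht
    have : t = c.1 := le_antisymm ht.2 ht.1
    rwa [this]⟩
  have hUne : U.Nonempty := ⟨c.1, by
    simp only [hU, Finset.mem_filter]
    refine ⟨hc1, le_refl _, ?_⟩
    intro t ht
    simp only [Finset.mem_Icc] at ht
    have : t = c.1 := le_antisymm ht.2 ht.1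
    rwa [this]⟩
  set a := T.min' hTne with ha
  set b := U.max' hUne with hb
  have haT : a ∈ T := T.min'_mem hTne
  have hbU : b ∈ U := U.max'_mem hUne
  simp only [hT, Finset.mem_filter] at haT
  simp only [hU, Finset.mem_filter] at hbU
  have hac : a ≤ c.1 := haT.2.1
  have hcb : c.1 ≤ b := hbU.2.1
  have hseg : ∀ t : ℤ, a ≤ t → t ≤ b → t ∈ L := by
    intro t h1 h2
    rcases le_total t c.1 with h | h
    · exact haT.2.2 t (Finset.mem_Icc.mpr ⟨h1, h⟩)
    · exact hbU.2.2 t (Finset.mem_Icc.mpr ⟨h, h2⟩)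
  refine ⟨Hseg c.2 a b, ⟨⟨c.2, a, b, le_trans hac hcb, rfl⟩, ?_, ?_⟩,
    mem_Hseg.mpr ⟨hac, hcb, rfl⟩⟩
  · intro p hp
    rw [mem_Hseg] at hp
    have := hseg p.1 hp.1 hp.2.1
    rw [hmemL] at this
    have hpe : p = (p.1, c.2) := by rw [← hp.2.2]
    rwa [← hpe] at this
  · rintro I' ⟨y', a', b', hab', rfl⟩ hsub hIsub
    -- I ⊆ I', show I' = I
    have hcI' : c ∈ Hseg y' a' b' := hIsub (mem_Hseg.mpr ⟨hac, hcb, rfl⟩)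
    rw [mem_Hseg] at hcI'
    have hy' : y' = c.2 := hcI'.2.2.symm
    subst hy'
    have haI' : (a, c.2) ∈ Hseg c.2 a' b' := hIsub (mem_Hseg.mpr ⟨le_refl _, le_trans hac hcb, rfl⟩)
    have hbI' : (b, c.2) ∈ Hseg c.2 a' b' := hIsub (mem_Hseg.mpr ⟨le_trans hac hcb, le_refl _, rfl⟩)
    rw [mem_Hseg] at haI' hbI'
    have ha'a : a' ≤ a := haI'.1
    have hbb' : b ≤ b' := hbI'.2.1
    have ha'T : a' ∈ T := by
      simp only [hT, Finset.mem_filter]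
      refine ⟨?_, le_trans ha'a hac, ?_⟩
      · rw [hmemL]
        exact hsub (mem_Hseg.mpr ⟨le_refl _, hab', rfl⟩)
      · intro t ht
        simp only [Finset.mem_Icc] at ht
        rw [hmemL]
        exact hsub (mem_Hseg.mpr ⟨ht.1, le_trans ht.2 (le_trans hcb hbb'), rfl⟩)
    have hb'U : b' ∈ U := by
      simp only [hU, Finset.mem_filter]
      refine ⟨?_, le_trans hcb hbb', ?_⟩
      · rw [hmemL]
        exact hsub (mem_Hseg.mpr ⟨hab', le_refl _, rfl⟩)
      · intro t ht
        simp only [Finset.mem_Icc] at ht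
        rw [hmemL]
        exact hsub (mem_Hseg.mpr ⟨le_trans (le_trans ha'a hac) ht.1, ht.2, rfl⟩)
    have h1 : a ≤ a' := T.min'_le _ ha'T
    have h2 : b' ≤ b := U.le_max' _ hb'U
    have : a' = a := le_antisymm ha'a h1
    have : b' = b := le_antisymm h2 hbb'
    subst this; subst ‹a' = a›
    rfl

end RookProof
namespace RookProof
open Finset

/-- existence of maximal vertical interval through a cell -/
lemma exists_maxV {P : Finset Cell} {c : Cell} (hc : c ∈ P) :
    ∃ I, IsMaxVInterval P I ∧ c ∈ I := by
  classical
  set L : Finset ℤ := (P.filter (fun d => d.1 = c.1)).image Prod.snd with hL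
  have hmemL : ∀ t : ℤ, t ∈ L ↔ (c.1, t) ∈ P := by
    intro t
    simp only [hL, Finset.mem_image, Finset.mem_filter]
    constructor
    · rintro ⟨d, ⟨hd, hd2⟩, rfl⟩
      have : d = (c.1, d.2) := by rw [← hd2]
      rwa [← this]
    · intro h; exact ⟨(c.1, t), ⟨h, rfl⟩, rfl⟩
  have hc1 : c.2 ∈ L := by rw [hmemL]; simpa using hc
  set T : Finset ℤ := L.filter (fun a => a ≤ c.2 ∧ ∀ t ∈ Finset.Icc a c.2, t ∈ L) with hT
  set U : Finset ℤ := L.filter (fun b => c.2 ≤ b ∧ ∀ t ∈ Finset.Icc c.2 b, t ∈ L) with hU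
  have hTne : T.Nonempty := ⟨c.2, by
    simp only [hT, Finset.mem_filter]
    refine ⟨hc1, le_refl _, ?_⟩
    intro t ht
    simp only [Finset.mem_Icc] at ht
    have : t = c.2 := le_antisymm ht.2 ht.1
    rwa [this]⟩
  have hUne : U.Nonempty := ⟨c.2, by
    simp only [hU, Finset.mem_filter]
    refine ⟨hc1, le_refl _, ?_⟩
    intro t ht
    simp only [Finset.mem_Icc] at ht
    have : t = c.2 := le_antisymm ht.2 ht.1
    rwa [this]⟩
  set a := T.min' hTne with ha
  set b := U.max' hUne with hb
  have haT : a ∈ T := T.min'_mem hTne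
  have hbU : b ∈ U := U.max'_mem hUne
  simp only [hT, Finset.mem_filter] at haT
  simp only [hU, Finset.mem_filter] at hbU
  have hac : a ≤ c.2 := haT.2.1
  have hcb : c.2 ≤ b := hbU.2.1
  have hseg : ∀ t : ℤ, a ≤ t → t ≤ b → t ∈ L := by
    intro t h1 h2
    rcases le_total t c.2 with h | h
    · exact haT.2.2 t (Finset.mem_Icc.mpr ⟨h1, h⟩)
    · exact hbU.2.2 t (Finset.mem_Icc.mpr ⟨h, h2⟩)
  refine ⟨Vseg c.1 a b, ⟨⟨c.1, a, b, le_trans hac hcb, rfl⟩, ?_, ?_⟩,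
    mem_Vseg.mpr ⟨hac, hcb, rfl⟩⟩
  · intro p hp
    rw [mem_Vseg] at hp
    have := hseg p.2 hp.1 hp.2.1
    rw [hmemL] at this
    have hpe : p = (c.1, p.2) := by rw [← hp.2.2]
    rwa [← hpe] at this
  · rintro I' ⟨x', a', b', hab', rfl⟩ hsub hIsub
    have hcI' : c ∈ Vseg x' a' b' := hIsub (mem_Vseg.mpr ⟨hac, hcb, rfl⟩)
    rw [mem_Vseg] at hcI'
    have hx' : x' = c.1 := hcI'.2.2.symm
    subst hx'
    have haI' : (c.1, a) ∈ Vseg c.1 a' b' := hIsub (mem_Vseg.mpr ⟨le_refl _, le_trans hac hcb, rfl⟩)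
    have hbI' : (c.1, b) ∈ Vseg c.1 a' b' := hIsub (mem_Vseg.mpr ⟨le_trans hac hcb, le_refl _, rfl⟩)
    rw [mem_Vseg] at haI' hbI'
    have ha'a : a' ≤ a := haI'.1
    have hbb' : b ≤ b' := hbI'.2.1
    have ha'T : a' ∈ T := by
      simp only [hT, Finset.mem_filter]
      refine ⟨?_, le_trans ha'a hac, ?_⟩
      · rw [hmemL]
        exact hsub (mem_Vseg.mpr ⟨le_refl _, hab', rfl⟩)
      · intro t ht
        simp only [Finset.mem_Icc] at ht
        rw [hmemL]
        exact hsub (mem_Vseg.mpr ⟨ht.1, le_trans ht.2 (le_trans hcb hbb'), rfl⟩)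
    have hb'U : b' ∈ U := by
      simp only [hU, Finset.mem_filter]
      refine ⟨?_, le_trans hcb hbb', ?_⟩
      · rw [hmemL]
        exact hsub (mem_Vseg.mpr ⟨hab', le_refl _, rfl⟩)
      · intro t ht
        simp only [Finset.mem_Icc] at ht
        rw [hmemL]
        exact hsub (mem_Vseg.mpr ⟨le_trans (le_trans ha'a hac) ht.1, ht.2, rfl⟩)
    have h1 : a ≤ a' := T.min'_le _ ha'T
    have h2 : b' ≤ b := U.le_max' _ hb'U
    have : a' = a := le_antisymm ha'a h1
    have : b' = b := le_antisymm h2 hbb'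
    subst this; subst ‹a' = a›
    rfl

/-- uniqueness of maximal horizontal intervals sharing a cell -/
lemma maxH_unique {P I J : Finset Cell} (hI : IsMaxHInterval P I) (hJ : IsMaxHInterval P J)
    (hne : (I ∩ J).Nonempty) : I = J := by
  obtain ⟨c, hc⟩ := hne
  rw [Finset.mem_inter] at hc
  obtain ⟨⟨y, a, b, hab, rfl⟩, hIP, hImax⟩ := hI
  obtain ⟨⟨y', a', b', hab', rfl⟩, hJP, hJmax⟩ := hJ
  have hcI : c ∈ Hseg y a b := hc.1
  have hcJ : c ∈ Hseg y' a' b' := hc.2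
  rw [mem_Hseg] at hcI hcJ
  obtain ⟨ha1, hb1, hy1⟩ := hcI
  obtain ⟨ha2, hb2, hy2⟩ := hcJ
  have hyy : y = y' := by omega
  subst hyy
  set K := Hseg y (min a a') (max b b') with hK
  have hKseg : IsHSeg K := ⟨y, min a a', max b b',
    le_trans (min_le_left _ _) (le_trans ha1 (le_trans hb1 (le_max_left _ _))), rfl⟩
  have hKP : K ⊆ P := by
    intro p hp
    rw [hK, mem_Hseg] at hp
    obtain ⟨h1, h2, h3⟩ := hp
    rcases le_total p.1 c.1 with h | h
    · rcases le_or_gt a p.1 with h4 | h4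
      · exact hIP (mem_Hseg.mpr ⟨h4, le_trans h hb1, h3⟩)
      · have : a' ≤ p.1 := by
          rcases min_cases a a' with ⟨he, _⟩ | ⟨he, hle⟩
          · omega
          · omega
        exact hJP (mem_Hseg.mpr ⟨this, le_trans h hb2, h3⟩)
    · rcases le_or_gt p.1 b with h4 | h4
      · exact hIP (mem_Hseg.mpr ⟨le_trans ha1 h, h4, h3⟩)
      · have : p.1 ≤ b' := by
          rcases max_cases b b' with ⟨he, hle⟩ | ⟨he, _⟩
          · omega
          · omega
        exact hJP (mem_Hseg.mpr ⟨le_trans ha2 h, this, h3⟩)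
  have hIK : Hseg y a b ⊆ K := by
    intro p hp; rw [mem_Hseg] at hp
    exact mem_Hseg.mpr ⟨le_trans (min_le_left _ _) hp.1, le_trans hp.2.1 (le_max_left _ _), hp.2.2⟩
  have hJK : Hseg y a' b' ⊆ K := by
    intro p hp; rw [mem_Hseg] at hp
    exact mem_Hseg.mpr ⟨le_trans (min_le_right _ _) hp.1, le_trans hp.2.1 (le_max_right _ _), hp.2.2⟩
  have h1 := hImax K hKseg hKP hIK
  have h2 := hJmax K hKseg hKP hJK
  rw [← h1, ← h2]

/-- uniqueness of maximal vertical intervals sharing a cell -/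
lemma maxV_unique {P I J : Finset Cell} (hI : IsMaxVInterval P I) (hJ : IsMaxVInterval P J)
    (hne : (I ∩ J).Nonempty) : I = J := by
  obtain ⟨c, hc⟩ := hne
  rw [Finset.mem_inter] at hc
  obtain ⟨⟨x, a, b, hab, rfl⟩, hIP, hImax⟩ := hI
  obtain ⟨⟨x', a', b', hab', rfl⟩, hJP, hJmax⟩ := hJ
  have hcI : c ∈ Vseg x a b := hc.1
  have hcJ : c ∈ Vseg x' a' b' := hc.2
  rw [mem_Vseg] at hcI hcJ
  obtain ⟨ha1, hb1, hx1⟩ := hcI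
  obtain ⟨ha2, hb2, hx2⟩ := hcJ
  have hxx : x = x' := by omega
  subst hxx
  set K := Vseg x (min a a') (max b b') with hK
  have hKseg : IsVSeg K := ⟨x, min a a', max b b',
    le_trans (min_le_left _ _) (le_trans ha1 (le_trans hb1 (le_max_left _ _))), rfl⟩
  have hKP : K ⊆ P := by
    intro p hp
    rw [hK, mem_Vseg] at hp
    obtain ⟨h1, h2, h3⟩ := hp
    rcases le_total p.2 c.2 with h | h
    · rcases le_or_gt a p.2 with h4 | h4
      · exact hIP (mem_Vseg.mpr ⟨h4, le_trans h hb1, h3⟩)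
      · have : a' ≤ p.2 := by
          rcases min_cases a a' with ⟨he, _⟩ | ⟨he, hle⟩
          · omega
          · omega
        exact hJP (mem_Vseg.mpr ⟨this, le_trans h hb2, h3⟩)
    · rcases le_or_gt p.2 b with h4 | h4
      · exact hIP (mem_Vseg.mpr ⟨le_trans ha1 h, h4, h3⟩)
      · have : p.2 ≤ b' := by
          rcases max_cases b b' with ⟨he, hle⟩ | ⟨he, _⟩
          · omega
          · omega
        exact hJP (mem_Vseg.mpr ⟨le_trans ha2 h, this, h3⟩)
  have hIK : Vseg x a b ⊆ K := by
    intro p hp; rw [mem_Vseg] at hp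
    exact mem_Vseg.mpr ⟨le_trans (min_le_left _ _) hp.1, le_trans hp.2.1 (le_max_left _ _), hp.2.2⟩
  have hJK : Vseg x a' b' ⊆ K := by
    intro p hp; rw [mem_Vseg] at hp
    exact mem_Vseg.mpr ⟨le_trans (min_le_right _ _) hp.1, le_trans hp.2.1 (le_max_right _ _), hp.2.2⟩
  have h1 := hImax K hKseg hKP hIK
  have h2 := hJmax K hKseg hKP hJK
  rw [← h1, ← h2]

end RookProof
namespace RookProof
open Finset

noncomputable def Hint (P : Finset Cell) (c : Cell) : Finset Cell := by
  classical
  exact if h : c ∈ P then (exists_maxH h).choose else ∅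

noncomputable def Vint (P : Finset Cell) (c : Cell) : Finset Cell := by
  classical
  exact if h : c ∈ P then (exists_maxV h).choose else ∅

variable {P : Finset Cell} {c d e : Cell}

lemma Hint_isMax (hc : c ∈ P) : IsMaxHInterval P (Hint P c) := by
  rw [Hint]; simp only [hc, dif_pos]
  exact (exists_maxH hc).choose_spec.1

lemma mem_Hint_self (hc : c ∈ P) : c ∈ Hint P c := by
  rw [Hint]; simp only [hc, dif_pos]
  exact (exists_maxH hc).choose_spec.2

lemma Vint_isMax (hc : c ∈ P) : IsMaxVInterval P (Vint P c) := by
  rw [Vint]; simp only [hc, dif_pos]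
  exact (exists_maxV hc).choose_spec.1

lemma mem_Vint_self (hc : c ∈ P) : c ∈ Vint P c := by
  rw [Vint]; simp only [hc, dif_pos]
  exact (exists_maxV hc).choose_spec.2

lemma Hint_subset (hc : c ∈ P) : Hint P c ⊆ P := (Hint_isMax hc).2.1
lemma Vint_subset (hc : c ∈ P) : Vint P c ⊆ P := (Vint_isMax hc).2.1

/-- any maximal horizontal interval containing `c` equals `Hint P c` -/
lemma eq_Hint {I : Finset Cell} (hc : c ∈ P) (hI : IsMaxHInterval P I) (hcI : c ∈ I) :
    I = Hint P c :=
  maxH_unique hI (Hint_isMax hc) ⟨c, Finset.mem_inter.mpr ⟨hcI, mem_Hint_self hc⟩⟩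

lemma eq_Vint {I : Finset Cell} (hc : c ∈ P) (hI : IsMaxVInterval P I) (hcI : c ∈ I) :
    I = Vint P c :=
  maxV_unique hI (Vint_isMax hc) ⟨c, Finset.mem_inter.mpr ⟨hcI, mem_Vint_self hc⟩⟩

lemma Hint_eq_of_mem (hc : c ∈ P) (hd : d ∈ Hint P c) : Hint P d = Hint P c := by
  have hdP : d ∈ P := Hint_subset hc hd
  exact (eq_Hint hdP (Hint_isMax hc) hd).symm

lemma Vint_eq_of_mem (hc : c ∈ P) (hd : d ∈ Vint P c) : Vint P d = Vint P c := by
  have hdP : d ∈ P := Vint_subset hc hd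
  exact (eq_Vint hdP (Vint_isMax hc) hd).symm

lemma mem_Hint_symm (hc : c ∈ P) (hd : d ∈ Hint P c) : c ∈ Hint P d := by
  rw [Hint_eq_of_mem hc hd]; exact mem_Hint_self hc

lemma mem_Vint_symm (hc : c ∈ P) (hd : d ∈ Vint P c) : c ∈ Vint P d := by
  rw [Vint_eq_of_mem hc hd]; exact mem_Vint_self hc

lemma snd_eq_of_mem_Hint (hc : c ∈ P) (hd : d ∈ Hint P c) : d.2 = c.2 := by
  obtain ⟨⟨y, a, b, hab, hseg⟩, _, _⟩ := Hint_isMax hc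
  have h1 : d ∈ Hseg y a b := by rw [hseg] at hd; exact hd
  have h2 : c ∈ Hseg y a b := by
    have := mem_Hint_self hc
    rw [hseg] at this; exact this
  rw [mem_Hseg] at h1 h2
  rw [h1.2.2, h2.2.2]

lemma fst_eq_of_mem_Vint (hc : c ∈ P) (hd : d ∈ Vint P c) : d.1 = c.1 := by
  obtain ⟨⟨x, a, b, hab, hseg⟩, _, _⟩ := Vint_isMax hc
  have h1 : d ∈ Vseg x a b := by rw [hseg] at hd; exact hd
  have h2 : c ∈ Vseg x a b := by
    have := mem_Vint_self hc
    rw [hseg] at this; exact this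
  rw [mem_Vseg] at h1 h2
  rw [h1.2.2, h2.2.2]

/-- a horizontal and a vertical interval meet in at most one cell -/
lemma eq_of_mem_Hint_Vint {u v : Cell} (hc : c ∈ P) (he : e ∈ P)
    (hu1 : u ∈ Hint P c) (hv1 : v ∈ Hint P c) (hu2 : u ∈ Vint P e) (hv2 : v ∈ Vint P e) :
    u = v := by
  have h1 := snd_eq_of_mem_Hint hc hu1
  have h2 := snd_eq_of_mem_Hint hc hv1
  have h3 := fst_eq_of_mem_Vint he hu2
  have h4 := fst_eq_of_mem_Vint he hv2
  have : u.1 = v.1 := by rw [h3, h4]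
  have h5 : u.2 = v.2 := by rw [h1, h2]
  exact Prod.ext this h5

lemma eq_of_mem_Hint_Vint_self (hc : c ∈ P) (hd1 : d ∈ Hint P c) (hd2 : d ∈ Vint P c) :
    d = c := by
  have h1 := snd_eq_of_mem_Hint hc hd1
  have h2 := fst_eq_of_mem_Vint hc hd2
  exact Prod.ext h2 h1

/- ### attack lemmas -/

lemma attacks_symm {P : Finset Cell} {c d : Cell} (h : Attacks P c d) : Attacks P d c := by
  obtain ⟨hne, I, hI, h1, h2⟩ := h
  exact ⟨hne.symm, I, hI, h2, h1⟩

lemma attacks_of_mem_Hint (hc : c ∈ P) (hd : d ∈ Hint P c) (hne : c ≠ d) : Attacks P c d :=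
  ⟨hne, Hint P c, Or.inl (Hint_isMax hc), mem_Hint_self hc, hd⟩

lemma attacks_of_mem_Vint (hc : c ∈ P) (hd : d ∈ Vint P c) (hne : c ≠ d) : Attacks P c d :=
  ⟨hne, Vint P c, Or.inr (Vint_isMax hc), mem_Vint_self hc, hd⟩

lemma mem_of_attacks (hc : c ∈ P) (h : Attacks P c d) : d ∈ Hint P c ∨ d ∈ Vint P c := by
  obtain ⟨hne, I, hI, h1, h2⟩ := h
  rcases hI with hI | hI
  · left; rw [← eq_Hint hc hI h1]; exact h2
  · right; rw [← eq_Vint hc hI h1]; exact h2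

lemma not_attacks (hc : c ∈ P) (h1 : d ∉ Hint P c) (h2 : d ∉ Vint P c) : ¬ Attacks P c d := by
  intro h
  rcases mem_of_attacks hc h with h' | h'
  · exact h1 h'
  · exact h2 h'

/- ### rook set lemmas -/

lemma rook_subset {F : Finset Cell} (hF : IsRookSet P F) : F ⊆ P := hF.1

/-- two cells of a rook set in a common maximal horizontal interval are equal -/
lemma rook_eq_of_mem_Hint {F : Finset Cell} {x y : Cell} (hF : IsRookSet P F) (hc : c ∈ P)
    (hx : x ∈ F) (hy : y ∈ F) (hx1 : x ∈ Hint P c) (hy1 : y ∈ Hint P c) : x = y := by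
  by_contra hne
  exact hF.2 x hx y hy ⟨hne, Hint P c, Or.inl (Hint_isMax hc), hx1, hy1⟩

lemma rook_eq_of_mem_Vint {F : Finset Cell} {x y : Cell} (hF : IsRookSet P F) (hc : c ∈ P)
    (hx : x ∈ F) (hy : y ∈ F) (hx1 : x ∈ Vint P c) (hy1 : y ∈ Vint P c) : x = y := by
  by_contra hne
  exact hF.2 x hx y hy ⟨hne, Vint P c, Or.inr (Vint_isMax hc), hx1, hy1⟩

/-- a rook set and maximality criterion -/
lemma maxRook_of_attacks {F : Finset Cell} (hF : IsRookSet P F)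
    (h : ∀ c ∈ P, c ∉ F → ∃ f ∈ F, Attacks P f c) : IsMaxRookSet P F := by
  refine ⟨hF, ?_⟩
  intro G hG hFG
  by_contra hne
  have : ∃ x ∈ G, x ∉ F := by
    by_contra h'
    push_neg at h'
    exact hne (Finset.Subset.antisymm h' hFG)
  obtain ⟨x, hxG, hxF⟩ := this
  obtain ⟨f, hfF, hfa⟩ := h x (hG.1 hxG) hxF
  exact hG.2 f (hFG hfF) x hxG hfa

lemma maxRook_attacks {F : Finset Cell} (hF : IsMaxRookSet P F) (hc : c ∈ P) (hcF : c ∉ F) :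
    ∃ f ∈ F, Attacks P f c := by
  by_contra h
  push_neg at h
  have hins : IsRookSet P (insert c F) := by
    refine ⟨?_, ?_⟩
    · intro x hx
      rcases Finset.mem_insert.mp hx with rfl | hx
      · exact hc
      · exact hF.1.1 hx
    · intro x hx y hy hatt
      rcases Finset.mem_insert.mp hx with hx' | hx'
      · rcases Finset.mem_insert.mp hy with hy' | hy'
        · exact hatt.1 (hx'.trans hy'.symm)
        · subst hx'
          exact h y hy' (attacks_symm hatt)
      · rcases Finset.mem_insert.mp hy with hy' | hy'
        · subst hy'
          exact h x hx' hatt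
        · exact hF.1.2 x hx' y hy' hatt
  have := hF.2 _ hins (Finset.subset_insert c F)
  rw [← this] at hcF
  exact hcF (Finset.mem_insert_self c F)

/-- every rook set extends to a maximal rook set -/
lemma exists_maxRook_extend {W : Finset Cell} (hW : IsRookSet P W) :
    ∃ G, W ⊆ G ∧ IsMaxRookSet P G := by
  classical
  set S : Finset (Finset Cell) := P.powerset.filter (fun T => IsRookSet P T ∧ W ⊆ T) with hS
  have hWS : W ∈ S := by
    simp only [hS, Finset.mem_filter, Finset.mem_powerset]
    exact ⟨hW.1, hW, Finset.Subset.refl W⟩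
  obtain ⟨G, hGS, hGmax⟩ := S.exists_max_image Finset.card ⟨W, hWS⟩
  simp only [hS, Finset.mem_filter, Finset.mem_powerset] at hGS
  refine ⟨G, hGS.2.2, hGS.2.1, ?_⟩
  intro G' hG' hGG'
  have hG'S : G' ∈ S := by
    simp only [hS, Finset.mem_filter, Finset.mem_powerset]
    exact ⟨hG'.1, hG', le_trans hGS.2.2 hGG'⟩
  exact (Finset.eq_of_subset_of_card_le hGG' (hGmax G' hG'S)).symm

end RookProof
namespace RookProof
open Finset

variable {P : Finset Cell} {d : ℕ}

lemma rook_mono {F S : Finset Cell} (hF : IsRookSet P F) (h : S ⊆ F) : IsRookSet P S :=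
  ⟨le_trans h hF.1, fun x hx y hy => hF.2 x (h hx) y (h hy)⟩

lemma rook_insert {S : Finset Cell} {c : Cell} (hS : IsRookSet P S) (hc : c ∈ P)
    (h : ∀ x ∈ S, ¬ Attacks P c x) : IsRookSet P (insert c S) := by
  refine ⟨?_, ?_⟩
  · intro x hx
    rcases Finset.mem_insert.mp hx with rfl | hx
    · exact hc
    · exact hS.1 hx
  · intro x hx y hy hatt
    rcases Finset.mem_insert.mp hx with hx' | hx'
    · rcases Finset.mem_insert.mp hy with hy' | hy'
      · exact hatt.1 (hx'.trans hy'.symm)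
      · subst hx'; exact h y hy' hatt
    · rcases Finset.mem_insert.mp hy with hy' | hy'
      · subst hy'; exact h x hx' (attacks_symm hatt)
      · exact hS.2 x hx' y hy' hatt

lemma card_rook_le (Hpure : ∀ F, IsMaxRookSet P F → F.card = d)
    {W : Finset Cell} (hW : IsRookSet P W) : W.card ≤ d := by
  obtain ⟨G, hWG, hG⟩ := exists_maxRook_extend hW
  calc W.card ≤ G.card := Finset.card_le_card hWG
    _ = d := Hpure G hG

/-- root and dead cell at the same `f₀` contradict purity -/
lemma deadroot (Hpure : ∀ F, IsMaxRookSet P F → F.card = d)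
    {F : Finset Cell} (hF : IsMaxRookSet P F) {f₀ c₀ y : Cell} (hf : f₀ ∈ F)
    (hc₀m : c₀ ∈ Vint P f₀) (hc₀ : ∀ x ∈ F, x ∉ Hint P c₀)
    (hym : y ∈ Hint P f₀) (hy : ∀ x ∈ F, x ∉ Vint P y) : False := by
  have hfP : f₀ ∈ P := hF.1.1 hf
  have hc₀P : c₀ ∈ P := Vint_subset hfP hc₀m
  have hyP : y ∈ P := Hint_subset hfP hym
  have hc₀F : c₀ ∉ F := fun h => hc₀ c₀ h (mem_Hint_self hc₀P)
  have hyF : y ∉ F := fun h => hy y h (mem_Vint_self hyP)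
  have hVc₀ : Vint P c₀ = Vint P f₀ := Vint_eq_of_mem hfP hc₀m
  have hHy : Hint P y = Hint P f₀ := Hint_eq_of_mem hfP hym
  have hcy : c₀ ≠ y := by
    intro h
    subst h
    exact hy f₀ hf (by rw [hVc₀]; exact mem_Vint_self hfP)
  have hS₀ : IsRookSet P (F.erase f₀) := rook_mono hF.1 (Finset.erase_subset _ _)
  have hS₁ : IsRookSet P (insert y (F.erase f₀)) := by
    refine rook_insert hS₀ hyP ?_
    intro x hx hatt
    have hxF : x ∈ F := Finset.mem_of_mem_erase hx
    have hxne : x ≠ f₀ := Finset.ne_of_mem_erase hx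
    rcases mem_of_attacks hyP hatt with h | h
    · rw [hHy] at h
      exact hxne (rook_eq_of_mem_Hint hF.1 hfP hxF hf h (mem_Hint_self hfP))
    · exact hy x hxF h
  have hS₂ : IsRookSet P (insert c₀ (insert y (F.erase f₀))) := by
    refine rook_insert hS₁ hc₀P ?_
    intro x hx hatt
    rcases Finset.mem_insert.mp hx with rfl | hx
    · rcases mem_of_attacks hc₀P hatt with h | h
      · exact hc₀ f₀ hf (by
          rw [← Hint_eq_of_mem hc₀P h, hHy]; exact mem_Hint_self hfP)
      · rw [hVc₀] at h
        exact hy f₀ hf (by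
          rw [Vint_eq_of_mem hfP h]; exact mem_Vint_self hfP)
    · have hxF : x ∈ F := Finset.mem_of_mem_erase hx
      have hxne : x ≠ f₀ := Finset.ne_of_mem_erase hx
      rcases mem_of_attacks hc₀P hatt with h | h
      · exact hc₀ x hxF h
      · rw [hVc₀] at h
        exact hxne (rook_eq_of_mem_Vint hF.1 hfP hxF hf h (mem_Vint_self hfP))
  have hcard : (insert c₀ (insert y (F.erase f₀))).card = F.card + 1 := by
    rw [Finset.card_insert_of_notMem, Finset.card_insert_of_notMem,
      Finset.card_erase_of_mem hf]
    · have : 1 ≤ F.card := Finset.card_pos.mpr ⟨f₀, hf⟩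
      omega
    · intro h
      exact hyF (Finset.mem_of_mem_erase h)
    · intro h
      rcases Finset.mem_insert.mp h with h | h
      · exact hcy h
      · exact hc₀F (Finset.mem_of_mem_erase h)
  have h1 := card_rook_le Hpure hS₂
  have h2 := Hpure F hF
  omega

end RookProof
namespace RookProof
open Finset

variable {P : Finset Cell} {d : ℕ}

def Link (P : Finset Cell) (g g' : Cell) : Prop :=
  (∃ u, u ∈ Hint P g ∧ u ∈ Vint P g') ∨ (∃ u, u ∈ Vint P g ∧ u ∈ Hint P g')

lemma rook_eq_self_of_mem_Hint {F : Finset Cell} {g x : Cell} (hF : IsRookSet P F)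
    (hg : g ∈ F) (hx : x ∈ F) (h : x ∈ Hint P g) : x = g :=
  rook_eq_of_mem_Hint hF (hF.1 hg) hx hg h (mem_Hint_self (hF.1 hg))

lemma rook_eq_self_of_mem_Vint {F : Finset Cell} {g x : Cell} (hF : IsRookSet P F)
    (hg : g ∈ F) (hx : x ∈ F) (h : x ∈ Vint P g) : x = g :=
  rook_eq_of_mem_Vint hF (hF.1 hg) hx hg h (mem_Vint_self (hF.1 hg))

/-- The key lemma: purity excludes chains from a root to a dead end. -/
lemma key (Hpure : ∀ F, IsMaxRookSet P F → F.card = d) :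
    ∀ m (F : Finset Cell) (f : ℕ → Cell), IsMaxRookSet P F →
      (∀ k, k ≤ m → f k ∈ F) →
      (∀ j k, j ≤ m → k ≤ m → f j = f k → j = k) →
      (∃ c, c ∈ Vint P (f 0) ∧ ∀ x ∈ F, x ∉ Hint P c) →
      (∀ k, k < m → Link P (f k) (f (k+1))) →
      (∃ c, c ∈ Hint P (f m) ∧ ∀ x ∈ F, x ∉ Vint P c) → False := by
  intro m
  induction m using Nat.strong_induction_on with
  | _ m IH =>
  intro F f hF hmem hinj hroot hlink hdead
  obtain ⟨c₀, hc₀m, hc₀⟩ := hroot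
  obtain ⟨cs, hcsm, hcs⟩ := hdead
  have hf₀F : f 0 ∈ F := hmem 0 (Nat.zero_le m)
  have hf₀P : f 0 ∈ P := hF.1.1 hf₀F
  have hc₀P : c₀ ∈ P := Vint_subset hf₀P hc₀m
  have hc₀F : c₀ ∉ F := fun h => hc₀ c₀ h (mem_Hint_self hc₀P)
  have hVc₀ : Vint P c₀ = Vint P (f 0) := Vint_eq_of_mem hf₀P hc₀m
  have hfmP : f m ∈ P := hF.1.1 (hmem m le_rfl)
  have hcsP : cs ∈ P := Hint_subset hfmP hcsm
  rcases Nat.eq_zero_or_pos m with hm | hm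
  · subst hm
    exact deadroot Hpure hF hf₀F hc₀m hc₀ hcsm hcs
  have hf₁F : f 1 ∈ F := hmem 1 hm
  have hf₁P : f 1 ∈ P := hF.1.1 hf₁F
  have hne01 : f 0 ≠ f 1 := fun h => by have := hinj 0 1 (Nat.zero_le m) hm h; omega
  -- the dead cell is in nobody's column among F; in particular f 0's column facts
  have hf₀Vcs : f 0 ∉ Vint P cs := hcs (f 0) hf₀F
  have hf₁Vcs : f 1 ∉ Vint P cs := hcs (f 1) hf₁F
  rcases hlink 0 hm with ⟨u, huH, huV⟩ | ⟨u, huV, huH⟩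
  · -- first link of type (ii): u ∈ H(f 0) ∩ V(f 1): swap the root
    have huP : u ∈ P := Hint_subset hf₀P huH
    set F' := insert c₀ (F.erase (f 0)) with hF'def
    have hbase : IsRookSet P (F.erase (f 0)) := rook_mono hF.1 (Finset.erase_subset _ _)
    have hF'rook : IsRookSet P F' := by
      refine rook_insert hbase hc₀P ?_
      intro x hx hatt
      have hxF : x ∈ F := Finset.mem_of_mem_erase hx
      have hxne : x ≠ f 0 := Finset.ne_of_mem_erase hx
      rcases mem_of_attacks hc₀P hatt with h | h
      · exact hc₀ x hxF h
      · rw [hVc₀] at h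
        exact hxne (rook_eq_self_of_mem_Vint hF.1 hf₀F hxF h)
    have hc₀f₀ : c₀ ≠ f 0 := fun h => hc₀F (h ▸ hf₀F)
    have hF'max : IsMaxRookSet P F' := by
      refine maxRook_of_attacks hF'rook ?_
      intro x hxP hxF'
      by_cases hx0 : x = f 0
      · subst hx0
        exact ⟨c₀, Finset.mem_insert_self _ _,
          attacks_of_mem_Vint hc₀P (mem_Vint_symm hf₀P hc₀m) hc₀f₀⟩
      · have hxF : x ∉ F := fun h =>
          hxF' (Finset.mem_insert.mpr (Or.inr (Finset.mem_erase.mpr ⟨hx0, h⟩)))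
        obtain ⟨g, hgF, hga⟩ := maxRook_attacks hF hxP hxF
        by_cases hg0 : g = f 0
        · subst hg0
          rcases mem_of_attacks hf₀P hga with h | h
          · by_cases hVx : ∃ h' ∈ F, h' ∈ Vint P x
            · obtain ⟨h', hh'F, hh'V⟩ := hVx
              have hxVh' : x ∈ Vint P h' := mem_Vint_symm hxP hh'V
              have hh'0 : h' ≠ f 0 := by
                intro he
                subst he
                exact hx0 (eq_of_mem_Hint_Vint_self hf₀P h hxVh')
              exact ⟨h', Finset.mem_insert.mpr (Or.inr (Finset.mem_erase.mpr ⟨hh'0, hh'F⟩)),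
                attacks_of_mem_Vint (hF.1.1 hh'F) hxVh' (fun he => hxF (he ▸ hh'F))⟩
            · push_neg at hVx
              exact (deadroot Hpure hF hf₀F hc₀m hc₀ h hVx).elim
          · refine ⟨c₀, Finset.mem_insert_self _ _,
              attacks_of_mem_Vint hc₀P (by rw [hVc₀]; exact h) ?_⟩
            intro he
            exact hxF' (he ▸ Finset.mem_insert_self _ _)
        · exact ⟨g, Finset.mem_insert.mpr (Or.inr (Finset.mem_erase.mpr ⟨hg0, hgF⟩)), hga⟩
    refine IH (m-1) (by omega) F' (fun k => f (k+1)) hF'max ?_ ?_ ?_ ?_ ?_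
    · intro k hk
      have h1 : f (k+1) ∈ F := hmem (k+1) (by omega)
      have h2 : f (k+1) ≠ f 0 := fun h => by
        have := hinj (k+1) 0 (by omega) (Nat.zero_le m) h; omega
      exact Finset.mem_insert.mpr (Or.inr (Finset.mem_erase.mpr ⟨h2, h1⟩))
    · intro j k hj hk he
      have := hinj (j+1) (k+1) (by omega) (by omega) he
      omega
    · refine ⟨u, huV, ?_⟩
      intro x hx hmem'
      have hHu : Hint P u = Hint P (f 0) := Hint_eq_of_mem hf₀P huH
      rw [hHu] at hmem'
      rcases Finset.mem_insert.mp hx with rfl | hx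
      · exact hc₀ (f 0) hf₀F (mem_Hint_symm hf₀P hmem')
      · exact (Finset.ne_of_mem_erase hx)
          (rook_eq_self_of_mem_Hint hF.1 hf₀F (Finset.mem_of_mem_erase hx) hmem')
    · intro k hk
      exact hlink (k+1) (by omega)
    · refine ⟨cs, ?_, ?_⟩
      · show cs ∈ Hint P (f (m - 1 + 1))
        rw [show m - 1 + 1 = m by omega]
        exact hcsm
      · intro x hx hmem'
        rcases Finset.mem_insert.mp hx with rfl | hx
        · have : f 0 ∈ Vint P cs := by
            rw [← Vint_eq_of_mem hcsP hmem', hVc₀]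
            exact mem_Vint_self hf₀P
          exact hf₀Vcs this
        · exact hcs x (Finset.mem_of_mem_erase hx) hmem'
  · -- first link of type (iii): u ∈ V(f 0) ∩ H(f 1)
    have huP : u ∈ P := Vint_subset hf₀P huV
    have hHu : Hint P u = Hint P (f 1) := Hint_eq_of_mem hf₁P huH
    have hVu : Vint P u = Vint P (f 0) := Vint_eq_of_mem hf₀P huV
    have huF : u ∉ F := by
      intro h
      have h1 : u = f 0 := rook_eq_self_of_mem_Vint hF.1 hf₀F h huV
      have h2 : u = f 1 := rook_eq_self_of_mem_Hint hF.1 hf₁F h huH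
      exact hne01 (h1 ▸ h2)
    set base := (F.erase (f 0)).erase (f 1) with hbasedef
    have hbase_sub : base ⊆ F := fun x hx =>
      Finset.mem_of_mem_erase (Finset.mem_of_mem_erase hx)
    have hbase_ne1 : ∀ x ∈ base, x ≠ f 1 := fun x hx => Finset.ne_of_mem_erase hx
    have hbase_ne0 : ∀ x ∈ base, x ≠ f 0 := fun x hx =>
      Finset.ne_of_mem_erase (Finset.mem_of_mem_erase hx)
    have hbase_rook : IsRookSet P base := rook_mono hF.1 hbase_sub
    have hmem_base : ∀ x ∈ F, x ≠ f 0 → x ≠ f 1 → x ∈ base := fun x hx h0 h1 =>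
      Finset.mem_erase.mpr ⟨h1, Finset.mem_erase.mpr ⟨h0, hx⟩⟩
    by_cases hcorner : ∃ w, w ∈ Hint P (f 0) ∧ w ∈ Vint P (f 1)
    · -- Case B: the corner cell exists
      obtain ⟨w, hwH, hwV⟩ := hcorner
      have hwP : w ∈ P := Hint_subset hf₀P hwH
      have hHw : Hint P w = Hint P (f 0) := Hint_eq_of_mem hf₀P hwH
      have hVw : Vint P w = Vint P (f 1) := Vint_eq_of_mem hf₁P hwV
      have hwF : w ∉ F := by
        intro h
        have h1 : w = f 0 := rook_eq_self_of_mem_Hint hF.1 hf₀F h hwH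
        have h2 : w = f 1 := rook_eq_self_of_mem_Vint hF.1 hf₁F h hwV
        exact hne01 (h1 ▸ h2)
      have hS1 : IsRookSet P (insert w base) := by
        refine rook_insert hbase_rook hwP ?_
        intro x hx hatt
        rcases mem_of_attacks hwP hatt with h | h
        · rw [hHw] at h
          exact hbase_ne0 x hx (rook_eq_self_of_mem_Hint hF.1 hf₀F (hbase_sub hx) h)
        · rw [hVw] at h
          exact hbase_ne1 x hx (rook_eq_self_of_mem_Vint hF.1 hf₁F (hbase_sub hx) h)
      have hc₀w : ¬ Attacks P c₀ w := by
        intro hatt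
        rcases mem_of_attacks hc₀P hatt with h | h
        · have : Hint P c₀ = Hint P (f 0) := by
            rw [← hHw]
            exact (Hint_eq_of_mem hc₀P h).symm
          exact hc₀ (f 0) hf₀F (by rw [this]; exact mem_Hint_self hf₀P)
        · rw [hVc₀] at h
          exact hwF ((eq_of_mem_Hint_Vint_self hf₀P hwH h) ▸ hf₀F)
      have hF'' : IsRookSet P (insert c₀ (insert w base)) := by
        refine rook_insert hS1 hc₀P ?_
        intro x hx hatt
        rcases Finset.mem_insert.mp hx with rfl | hx
        · exact hc₀w hatt
        · rcases mem_of_attacks hc₀P hatt with h | h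
          · exact hc₀ x (hbase_sub hx) h
          · rw [hVc₀] at h
            exact hbase_ne0 x hx (rook_eq_self_of_mem_Vint hF.1 hf₀F (hbase_sub hx) h)
      have hc₀ne_w : c₀ ≠ w := by
        intro h
        subst h
        exact hc₀F ((eq_of_mem_Hint_Vint_self hf₀P hwH (by rw [← hVc₀]; exact mem_Vint_self hc₀P)) ▸ hf₀F)
      have hcard_base : base.card = F.card - 2 := by
        rw [hbasedef, Finset.card_erase_of_mem
          (Finset.mem_erase.mpr ⟨Ne.symm hne01, hf₁F⟩), Finset.card_erase_of_mem hf₀F]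
        omega
      rcases eq_or_lt_of_le (show 1 ≤ m from hm) with hm1 | hm2
      · -- m = 1 : direct (d+1)-rook set
        have hm1' : m = 1 := hm1.symm
        subst hm1'
        have hHcs : Hint P cs = Hint P (f 1) := Hint_eq_of_mem hf₁P hcsm
        have hcsF : cs ∉ F := fun h => hcs cs h (mem_Vint_self hcsP)
        have hW : IsRookSet P (insert cs (insert c₀ (insert w base))) := by
          refine rook_insert hF'' hcsP ?_
          intro x hx hatt
          rcases Finset.mem_insert.mp hx with rfl | hx
          · -- x = c₀
            rcases mem_of_attacks hcsP hatt with h | h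
            · rw [hHcs] at h
              exact hc₀ (f 1) hf₁F (mem_Hint_symm hf₁P h)
            · have : f 0 ∈ Vint P cs := by
                rw [← Vint_eq_of_mem hcsP h, hVc₀]
                exact mem_Vint_self hf₀P
              exact hf₀Vcs this
          · rcases Finset.mem_insert.mp hx with rfl | hx
            · -- x = w
              rcases mem_of_attacks hcsP hatt with h | h
              · rw [hHcs] at h
                have : Hint P (f 0) = Hint P (f 1) := by
                  rw [← hHw]
                  exact Hint_eq_of_mem hf₁P h
                exact hne01 (rook_eq_self_of_mem_Hint hF.1 hf₁F hf₀F
                  (by rw [← this]; exact mem_Hint_self hf₀P))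
              · have : f 1 ∈ Vint P cs := by
                  rw [← Vint_eq_of_mem hcsP h, hVw]
                  exact mem_Vint_self hf₁P
                exact hf₁Vcs this
            · -- x ∈ base
              rcases mem_of_attacks hcsP hatt with h | h
              · rw [hHcs] at h
                exact hbase_ne1 x hx (rook_eq_self_of_mem_Hint hF.1 hf₁F (hbase_sub hx) h)
              · exact hcs x (hbase_sub hx) h
        have hcsne_c₀ : cs ≠ c₀ := by
          intro h
          apply hf₀Vcs
          rw [h, hVc₀]
          exact mem_Vint_self hf₀P
        have hcsne_w : cs ≠ w := by
          intro h
          apply hf₁Vcs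
          rw [h, hVw]
          exact mem_Vint_self hf₁P
        have hcard : (insert cs (insert c₀ (insert w base))).card = F.card + 1 := by
          rw [Finset.card_insert_of_notMem, Finset.card_insert_of_notMem,
            Finset.card_insert_of_notMem, hcard_base]
          · have h2 : 2 ≤ F.card := by
              have : ({f 0, f 1} : Finset Cell) ⊆ F := by
                intro x hx
                rcases Finset.mem_insert.mp hx with rfl | hx
                · exact hf₀F
                · rw [Finset.mem_singleton] at hx
                  rw [hx]
                  exact hf₁F
              have := Finset.card_le_card this
              rwa [Finset.card_pair hne01] at this
            omega
          · exact fun h => hwF (hbase_sub h)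
          · intro h
            rcases Finset.mem_insert.mp h with h | h
            · exact hc₀ne_w h
            · exact hc₀F (hbase_sub h)
          · intro h
            rcases Finset.mem_insert.mp h with h | h
            · exact hcsne_c₀ h
            · rcases Finset.mem_insert.mp h with h | h
              · exact hcsne_w h
              · exact hcsF (hbase_sub h)
        have h1 := card_rook_le Hpure hW
        have h2 := Hpure F hF
        omega
      · -- m ≥ 2 : swap to F'' and recurse
        have hHf₁free : ∀ x ∈ insert c₀ (insert w base), x ∉ Hint P (f 1) := by
          intro x hx hmem'
          rcases Finset.mem_insert.mp hx with rfl | hx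
          · exact hc₀ (f 1) hf₁F (mem_Hint_symm hf₁P hmem')
          · rcases Finset.mem_insert.mp hx with rfl | hx
            · exact hwF ((eq_of_mem_Hint_Vint_self hf₁P hmem' hwV) ▸ hf₁F)
            · exact hbase_ne1 x hx (rook_eq_self_of_mem_Hint hF.1 hf₁F (hbase_sub hx) hmem')
        have hVcs_free : ∀ x ∈ insert c₀ (insert w base), x ∉ Vint P cs := by
          intro x hx hmem'
          rcases Finset.mem_insert.mp hx with rfl | hx
          · apply hf₀Vcs
            rw [← Vint_eq_of_mem hcsP hmem', hVc₀]
            exact mem_Vint_self hf₀P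
          · rcases Finset.mem_insert.mp hx with rfl | hx
            · apply hf₁Vcs
              rw [← Vint_eq_of_mem hcsP hmem', hVw]
              exact mem_Vint_self hf₁P
            · exact hcs x (hbase_sub hx) hmem'
        have hF''max : IsMaxRookSet P (insert c₀ (insert w base)) := by
          refine maxRook_of_attacks hF'' ?_
          intro x hxP hxF''
          have hxc₀ : x ≠ c₀ := fun h => hxF'' (h ▸ Finset.mem_insert_self _ _)
          have hxw : x ≠ w := fun h =>
            hxF'' (h ▸ Finset.mem_insert.mpr (Or.inr (Finset.mem_insert_self _ _)))
          by_cases hx0 : x = f 0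
          · subst hx0
            exact ⟨c₀, Finset.mem_insert_self _ _,
              attacks_of_mem_Vint hc₀P (mem_Vint_symm hf₀P hc₀m) (Ne.symm hxc₀)⟩
          by_cases hx1 : x = f 1
          · subst hx1
            exact ⟨w, Finset.mem_insert.mpr (Or.inr (Finset.mem_insert_self _ _)),
              attacks_of_mem_Vint hwP (mem_Vint_symm hf₁P hwV) (Ne.symm hxw)⟩
          have hxF : x ∉ F := fun h =>
            hxF'' (Finset.mem_insert.mpr (Or.inr (Finset.mem_insert.mpr
              (Or.inr (hmem_base x h hx0 hx1)))))
          obtain ⟨g, hgF, hga⟩ := maxRook_attacks hF hxP hxF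
          by_cases hg0 : g = f 0
          · subst hg0
            rcases mem_of_attacks hf₀P hga with h | h
            · -- x ∈ H(f 0) = H(w)
              refine ⟨w, Finset.mem_insert.mpr (Or.inr (Finset.mem_insert_self _ _)),
                attacks_of_mem_Hint hwP (by rw [hHw]; exact h) (Ne.symm hxw)⟩
            · refine ⟨c₀, Finset.mem_insert_self _ _,
                attacks_of_mem_Vint hc₀P (by rw [hVc₀]; exact h) (Ne.symm hxc₀)⟩
          by_cases hg1 : g = f 1
          · subst hg1
            rcases mem_of_attacks hf₁P hga with h | h
            · -- x ∈ H(f 1)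
              by_cases hVx : ∃ h' ∈ F, h' ∈ Vint P x
              · obtain ⟨h', hh'F, hh'V⟩ := hVx
                have hxVh' : x ∈ Vint P h' := mem_Vint_symm hxP hh'V
                by_cases hh'0 : h' = f 0
                · subst hh'0
                  refine ⟨c₀, Finset.mem_insert_self _ _,
                    attacks_of_mem_Vint hc₀P (by rw [hVc₀]; exact hxVh') (Ne.symm hxc₀)⟩
                by_cases hh'1 : h' = f 1
                · subst hh'1
                  exact absurd (eq_of_mem_Hint_Vint_self hf₁P h hxVh') hx1
                · exact ⟨h', Finset.mem_insert.mpr (Or.inr (Finset.mem_insert.mpr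
                    (Or.inr (hmem_base h' hh'F hh'0 hh'1)))),
                    attacks_of_mem_Vint (hF.1.1 hh'F) hxVh' (fun he => hxF (he ▸ hh'F))⟩
              · push_neg at hVx
                exact (IH 1 hm2 F f hF (fun k hk => hmem k (by omega))
                  (fun j k hj hk he => hinj j k (by omega) (by omega) he)
                  ⟨c₀, hc₀m, hc₀⟩ (fun k hk => hlink k (by omega)) ⟨x, h, hVx⟩).elim
            · -- x ∈ V(f 1) = V(w)
              refine ⟨w, Finset.mem_insert.mpr (Or.inr (Finset.mem_insert_self _ _)),
                attacks_of_mem_Vint hwP (by rw [hVw]; exact h) (Ne.symm hxw)⟩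
          · exact ⟨g, Finset.mem_insert.mpr (Or.inr (Finset.mem_insert.mpr
              (Or.inr (hmem_base g hgF hg0 hg1)))), hga⟩
        -- now recurse, depending on the type of the second link
        rcases hlink 1 hm2 with ⟨v, hvH, hvV⟩ | ⟨v, hvV, hvH⟩
        · -- second link of type (ii): root c₂ = v for the chain f 2, ..., f m
          refine IH (m-2) (by omega) (insert c₀ (insert w base)) (fun k => f (k+2)) hF''max
            ?_ ?_ ?_ ?_ ?_
          · intro k hk
            exact Finset.mem_insert.mpr (Or.inr (Finset.mem_insert.mpr (Or.inr
              (hmem_base (f (k+2)) (hmem (k+2) (by omega))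
                (fun h => by have := hinj (k+2) 0 (by omega) (by omega) h; omega)
                (fun h => by have := hinj (k+2) 1 (by omega) (by omega) h; omega)))))
          · intro j k hj hk he
            have := hinj (j+2) (k+2) (by omega) (by omega) he
            omega
          · refine ⟨v, hvV, ?_⟩
            intro x hx hmem'
            have : Hint P v = Hint P (f 1) := Hint_eq_of_mem hf₁P hvH
            rw [this] at hmem'
            exact hHf₁free x hx hmem'
          · intro k hk
            exact hlink (k+2) (by omega)
          · refine ⟨cs, ?_, ?_⟩
            · show cs ∈ Hint P (f (m - 2 + 2))
              rw [show m - 2 + 2 = m by omega]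
              exact hcsm
            · exact hVcs_free
        · -- second link of type (iii): chain w, f 2, ..., f m
          refine IH (m-1) (by omega) (insert c₀ (insert w base))
            (fun k => if k = 0 then w else f (k+1)) hF''max ?_ ?_ ?_ ?_ ?_
          · intro k hk
            by_cases hk0 : k = 0
            · simp only [hk0, if_pos]
              exact Finset.mem_insert.mpr (Or.inr (Finset.mem_insert_self _ _))
            · simp only [hk0, if_neg]
              exact Finset.mem_insert.mpr (Or.inr (Finset.mem_insert.mpr (Or.inr
                (hmem_base (f (k+1)) (hmem (k+1) (by omega))
                  (fun h => by have := hinj (k+1) 0 (by omega) (by omega) h; omega)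
                  (fun h => by have := hinj (k+1) 1 (by omega) (by omega) h; omega)))))
          · intro j k hj hk he
            by_cases hj0 : j = 0 <;> by_cases hk0 : k = 0
            · omega
            · have he' : w = f (k+1) := by simpa [hj0, hk0] using he
              exact absurd (by rw [he']; exact hmem (k+1) (by omega)) hwF
            · have he' : w = f (j+1) := by
                have := by simpa [hj0, hk0] using he
                exact this.symm
              exact absurd (by rw [he']; exact hmem (j+1) (by omega)) hwF
            · simp only [hj0, hk0, if_neg] at he
              have := hinj (j+1) (k+1) (by omega) (by omega) he
              omega
          · refine ⟨f 1, ?_, ?_⟩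
            · show f 1 ∈ Vint P w
              exact mem_Vint_symm hf₁P hwV
            · exact hHf₁free
          · intro k hk
            by_cases hk0 : k = 0
            · subst hk0
              show Link P (if 0 = 0 then w else f 1) (if 1 = 0 then w else f 2)
              rw [if_pos rfl, if_neg one_ne_zero]
              exact Or.inr ⟨v, by rw [hVw]; exact hvV, hvH⟩
            · show Link P (if k = 0 then w else f (k+1)) (if k+1 = 0 then w else f (k+2))
              rw [if_neg hk0, if_neg (Nat.succ_ne_zero k)]
              exact hlink (k+1) (by omega)
          · refine ⟨cs, ?_, ?_⟩
            · show cs ∈ Hint P (if m - 1 = 0 then w else f (m-1+1))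
              rw [if_neg (by omega), show m - 1 + 1 = m by omega]
              exact hcsm
            · exact hVcs_free
    · -- Case A : no corner cell
      by_cases hroot1 : ∃ y, y ∈ Vint P (f 1) ∧ ∀ x ∈ F, x ∉ Hint P y
      · -- root moves to f 1 within F itself
        refine IH (m-1) (by omega) F (fun k => f (k+1)) hF ?_ ?_ hroot1 ?_ ?_
        · intro k hk
          exact hmem (k+1) (by omega)
        · intro j k hj hk he
          have := hinj (j+1) (k+1) (by omega) (by omega) he
          omega
        · intro k hk
          exact hlink (k+1) (by omega)
        · refine ⟨cs, ?_, hcs⟩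
          show cs ∈ Hint P (f (m - 1 + 1))
          rw [show m - 1 + 1 = m by omega]
          exact hcsm
      by_cases hdead0 : ∃ y, y ∈ Hint P (f 0) ∧ ∀ x ∈ F, x ∉ Vint P y
      · obtain ⟨y, h1, h2⟩ := hdead0
        exact deadroot Hpure hF hf₀F hc₀m hc₀ h1 h2
      push_neg at hroot1
      push_neg at hdead0
      -- the set Z = base ∪ {u} is a maximal rook set of size d - 1
      have hZrook : IsRookSet P (insert u base) := by
        refine rook_insert hbase_rook huP ?_
        intro x hx hatt
        rcases mem_of_attacks huP hatt with h | h
        · rw [hHu] at h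
          exact hbase_ne1 x hx (rook_eq_self_of_mem_Hint hF.1 hf₁F (hbase_sub hx) h)
        · rw [hVu] at h
          exact hbase_ne0 x hx (rook_eq_self_of_mem_Vint hF.1 hf₀F (hbase_sub hx) h)
      have hZmax : IsMaxRookSet P (insert u base) := by
        refine maxRook_of_attacks hZrook ?_
        intro x hxP hxZ
        have hxu : x ≠ u := fun h => hxZ (h ▸ Finset.mem_insert_self _ _)
        by_cases hx0 : x = f 0
        · subst hx0
          exact ⟨u, Finset.mem_insert_self _ _,
            attacks_of_mem_Vint huP (by rw [hVu]; exact mem_Vint_self hf₀P) (Ne.symm hxu)⟩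
        by_cases hx1 : x = f 1
        · subst hx1
          exact ⟨u, Finset.mem_insert_self _ _,
            attacks_of_mem_Hint huP (by rw [hHu]; exact mem_Hint_self hf₁P) (Ne.symm hxu)⟩
        have hxF : x ∉ F := fun h =>
          hxZ (Finset.mem_insert.mpr (Or.inr (hmem_base x h hx0 hx1)))
        obtain ⟨g, hgF, hga⟩ := maxRook_attacks hF hxP hxF
        by_cases hg0 : g = f 0
        · subst hg0
          rcases mem_of_attacks hf₀P hga with h | h
          · -- x ∈ H(f 0)
            obtain ⟨h', hh'F, hh'V⟩ := hdead0 x h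
            have hxVh' : x ∈ Vint P h' := mem_Vint_symm hxP hh'V
            by_cases hh'0 : h' = f 0
            · subst hh'0
              exact ⟨u, Finset.mem_insert_self _ _,
                attacks_of_mem_Vint huP (by rw [hVu]; exact hxVh') (Ne.symm hxu)⟩
            by_cases hh'1 : h' = f 1
            · subst hh'1
              exact absurd ⟨x, h, hxVh'⟩ hcorner
            · exact ⟨h', Finset.mem_insert.mpr (Or.inr (hmem_base h' hh'F hh'0 hh'1)),
                attacks_of_mem_Vint (hF.1.1 hh'F) hxVh' (fun he => hxF (he ▸ hh'F))⟩
          · exact ⟨u, Finset.mem_insert_self _ _,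
              attacks_of_mem_Vint huP (by rw [hVu]; exact h) (Ne.symm hxu)⟩
        by_cases hg1 : g = f 1
        · subst hg1
          rcases mem_of_attacks hf₁P hga with h | h
          · exact ⟨u, Finset.mem_insert_self _ _,
              attacks_of_mem_Hint huP (by rw [hHu]; exact h) (Ne.symm hxu)⟩
          · -- x ∈ V(f 1)
            obtain ⟨h', hh'F, hh'H⟩ := hroot1 x h
            have hxHh' : x ∈ Hint P h' := mem_Hint_symm hxP hh'H
            by_cases hh'1 : h' = f 1
            · subst hh'1
              exact absurd (eq_of_mem_Hint_Vint_self hf₁P hxHh' h) hx1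
            by_cases hh'0 : h' = f 0
            · subst hh'0
              exact absurd ⟨x, hxHh', h⟩ hcorner
            · exact ⟨h', Finset.mem_insert.mpr (Or.inr (hmem_base h' hh'F hh'0 hh'1)),
                attacks_of_mem_Hint (hF.1.1 hh'F) hxHh' (fun he => hxF (he ▸ hh'F))⟩
        · exact ⟨g, Finset.mem_insert.mpr (Or.inr (hmem_base g hgF hg0 hg1)), hga⟩
      have hcard_base : base.card = F.card - 2 := by
        rw [hbasedef, Finset.card_erase_of_mem
          (Finset.mem_erase.mpr ⟨Ne.symm hne01, hf₁F⟩), Finset.card_erase_of_mem hf₀F]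
        omega
      have hcardZ : (insert u base).card = F.card - 1 := by
        rw [Finset.card_insert_of_notMem (fun h => huF (hbase_sub h)), hcard_base]
        have h2 : 2 ≤ F.card := by
          have : ({f 0, f 1} : Finset Cell) ⊆ F := by
            intro x hx
            rcases Finset.mem_insert.mp hx with rfl | hx
            · exact hf₀F
            · rw [Finset.mem_singleton] at hx
              rw [hx]
              exact hf₁F
          have := Finset.card_le_card this
          rwa [Finset.card_pair hne01] at this
        omega
      have h1 := Hpure _ hZmax
      have h2 := Hpure F hF
      have h3 : 2 ≤ F.card := by
        have : ({f 0, f 1} : Finset Cell) ⊆ F := by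
          intro x hx
          rcases Finset.mem_insert.mp hx with rfl | hx
          · exact hf₀F
          · rw [Finset.mem_singleton] at hx
            rw [hx]
            exact hf₁F
        have := Finset.card_le_card this
        rwa [Finset.card_pair hne01] at this
      omega

end RookProof
namespace RookProof
open Finset

variable {P : Finset Cell} {d : ℕ}

/-- chains without injectivity requirement -/
def ChainW (P F : Finset Cell) (m : ℕ) (f : ℕ → Cell) : Prop :=
  (∀ k, k ≤ m → f k ∈ F) ∧
  (∃ c, c ∈ Vint P (f 0) ∧ ∀ x ∈ F, x ∉ Hint P c) ∧
  (∀ k, k < m → Link P (f k) (f (k+1)))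

/-- `g` is forced (its column interval must be used) -/
def ForcedF (P F : Finset Cell) (g : Cell) : Prop :=
  ∃ m f, ChainW P F m f ∧ f m = g

lemma forced_root {F : Finset Cell} {g : Cell} (hg : g ∈ F)
    (h : ∃ c, c ∈ Vint P g ∧ ∀ x ∈ F, x ∉ Hint P c) : ForcedF P F g :=
  ⟨0, fun _ => g, ⟨fun _ _ => hg, h, fun k hk => absurd hk (Nat.not_lt_zero k)⟩, rfl⟩

lemma forced_step {F : Finset Cell} {g g' : Cell} (hg : ForcedF P F g) (hg' : g' ∈ F)
    (hl : Link P g g') : ForcedF P F g' := by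
  classical
  obtain ⟨m, f, ⟨hmem, hroot, hlink⟩, hend⟩ := hg
  refine ⟨m+1, fun t => if t ≤ m then f t else g', ⟨?_, ?_, ?_⟩, ?_⟩
  · intro k hk
    show (if k ≤ m then f k else g') ∈ F
    by_cases h : k ≤ m
    · rw [if_pos h]; exact hmem k h
    · rw [if_neg h]; exact hg'
  · obtain ⟨c, hc1, hc2⟩ := hroot
    refine ⟨c, ?_, hc2⟩
    show c ∈ Vint P (if 0 ≤ m then f 0 else g')
    rw [if_pos (Nat.zero_le m)]
    exact hc1
  · intro k hk
    by_cases h : k < m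
    · show Link P (if k ≤ m then f k else g') (if k + 1 ≤ m then f (k+1) else g')
      rw [if_pos (by omega), if_pos (by omega)]
      exact hlink k h
    · have hkm : k = m := by omega
      subst hkm
      show Link P (if k ≤ k then f k else g') (if k + 1 ≤ k then f (k+1) else g')
      rw [if_pos le_rfl, if_neg (by omega), hend]
      exact hl
  · show (if m + 1 ≤ m then f (m+1) else g') = g'
    rw [if_neg (by omega)]

/-- purity: no forced cell has a dead row -/
lemma forced_not_dead (Hpure : ∀ F, IsMaxRookSet P F → F.card = d)
    {F : Finset Cell} {g : Cell} (hF : IsMaxRookSet P F) (hg : ForcedF P F g)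
    (hdead : ∃ c, c ∈ Hint P g ∧ ∀ x ∈ F, x ∉ Vint P c) : False := by
  classical
  obtain ⟨m, f, hch, hend⟩ := hg
  subst hend
  revert f
  induction m using Nat.strong_induction_on with
  | _ m IH =>
  intro f hch hdead
  by_cases hinj : ∀ j k, j ≤ m → k ≤ m → f j = f k → j = k
  · exact key Hpure m F f hF hch.1 hinj hch.2.1 hch.2.2 hdead
  · push_neg at hinj
    obtain ⟨j, k, hj, hk, heq, hne⟩ := hinj
    have shrink : ∀ j k, j < k → k ≤ m → f j = f k → False := by
      intro j k hjk hk heq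
      obtain ⟨c, hc, hcfree⟩ := hdead
      refine IH (m - (k - j)) (by omega) (fun t => if t ≤ j then f t else f (t + (k - j)))
        ⟨?_, ?_, ?_⟩ ?_
      · intro t ht
        show (if t ≤ j then f t else f (t + (k - j))) ∈ F
        by_cases h : t ≤ j
        · rw [if_pos h]; exact hch.1 t (by omega)
        · rw [if_neg h]; exact hch.1 (t + (k - j)) (by omega)
      · obtain ⟨c', hc'1, hc'2⟩ := hch.2.1
        refine ⟨c', ?_, hc'2⟩
        show c' ∈ Vint P (if 0 ≤ j then f 0 else f (0 + (k - j)))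
        rw [if_pos (Nat.zero_le j)]
        exact hc'1
      · intro t ht
        show Link P (if t ≤ j then f t else f (t + (k - j)))
          (if t + 1 ≤ j then f (t+1) else f (t + 1 + (k - j)))
        by_cases h1 : t + 1 ≤ j
        · rw [if_pos (by omega), if_pos h1]
          exact hch.2.2 t (by omega)
        · by_cases h2 : t ≤ j
          · have htj : t = j := by omega
            subst htj
            rw [if_pos h2, if_neg h1, heq, show t + 1 + (k - t) = k + 1 by omega]
            exact hch.2.2 k (by omega)
          · rw [if_neg h2, if_neg h1, show t + 1 + (k - j) = (t + (k - j)) + 1 by omega]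
            exact hch.2.2 (t + (k - j)) (by omega)
      · refine ⟨c, ?_, hcfree⟩
        show c ∈ Hint P (if m - (k - j) ≤ j then f (m - (k - j)) else f (m - (k - j) + (k - j)))
        by_cases h : m - (k - j) ≤ j
        · rw [if_pos h, show m - (k - j) = j by omega, heq, show k = m by omega]
          exact hc
        · rw [if_neg h, show m - (k - j) + (k - j) = m by omega]
          exact hc
    rcases Nat.lt_trichotomy j k with hlt | h | hlt
    · exact shrink j k hlt hk heq
    · exact hne h
    · exact shrink k j hlt hj heq.symm

lemma attacks_of_maxInterval {I : Finset Cell} {x y : Cell} (h : IsMaxInterval P I)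
    (hx : x ∈ I) (hy : y ∈ I) (hne : x ≠ y) : Attacks P x y :=
  ⟨hne, I, h, hx, hy⟩

lemma maxInterval_nonempty {I : Finset Cell} (h : IsMaxInterval P I) :
    I.Nonempty ∧ I ⊆ P := by
  rcases h with ⟨⟨y, a, b, hab, rfl⟩, hsub, -⟩ | ⟨⟨x, a, b, hab, rfl⟩, hsub, -⟩
  · exact ⟨⟨(a, y), mem_Hseg.mpr ⟨le_rfl, hab, rfl⟩⟩, hsub⟩
  · exact ⟨⟨(x, a), mem_Vseg.mpr ⟨le_rfl, hab, rfl⟩⟩, hsub⟩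

lemma empty_rook : IsRookSet P ∅ :=
  ⟨Finset.empty_subset P, fun c hc => absurd hc (Finset.notMem_empty c)⟩

end RookProof
namespace RookProof
open Finset

lemma super_to_pure {P : Finset Cell} {d : ℕ} {A : Finset (Finset Cell)}
    (hA : IsSuperPartition P A) (hAcard : A.card = d) :
    ∀ F, IsMaxRookSet P F → F.card = d := by
  classical
  obtain ⟨⟨hAmax, hAdisj, hAcover⟩, hAsuper⟩ := hA
  intro F hFmax
  have hFP : F ⊆ P := hFmax.1.1
  have h1 : ∀ I ∈ A, (I ∩ F).Nonempty := by
    intro I hI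
    by_contra he
    rw [Finset.not_nonempty_iff_eq_empty] at he
    apply hAsuper I hI
    refine ⟨F, hFmax.1, by rw [Finset.inter_comm]; exact he, ?_⟩
    intro c hc
    have hcP : c ∈ P := (maxInterval_nonempty (hAmax I hI)).2 hc
    have hcF : c ∉ F := fun h => by
      have : c ∈ I ∩ F := Finset.mem_inter.mpr ⟨hc, h⟩
      rw [he] at this
      exact absurd this (Finset.notMem_empty c)
    exact maxRook_attacks hFmax hcP hcF
  set ψ : Finset Cell → Cell := fun I => if h : (I ∩ F).Nonempty then h.choose else (0,0)
    with hψdef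
  have hψ : ∀ I ∈ A, ψ I ∈ I ∩ F := by
    intro I hI
    have h := h1 I hI
    have : ψ I = h.choose := dif_pos h
    rw [this]
    exact h.choose_spec
  have hAF : A.card ≤ F.card := by
    refine Finset.card_le_card_of_injOn ψ (fun I hI => (Finset.mem_inter.mp (hψ I hI)).2) ?_
    intro I hI J hJ he
    by_contra hne
    have hdisj := hAdisj I hI J hJ hne
    have h1' := (Finset.mem_inter.mp (hψ I hI)).1
    have h2' := (Finset.mem_inter.mp (hψ J hJ)).1
    rw [he] at h1'
    exact (Finset.disjoint_left.mp hdisj h1') h2'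
  set φ : Cell → Finset Cell := fun x => if h : ∃ J ∈ A, x ∈ J then h.choose else ∅ with hφdef
  have hφ : ∀ x ∈ F, φ x ∈ A ∧ x ∈ φ x := by
    intro x hx
    have hxP : x ∈ P := hFP hx
    have hex : ∃ J ∈ A, x ∈ J := by
      rw [← hAcover] at hxP
      obtain ⟨J, hJ, hxJ⟩ := Finset.mem_biUnion.mp hxP
      exact ⟨J, hJ, hxJ⟩
    have : φ x = hex.choose := dif_pos hex
    rw [this]
    exact ⟨hex.choose_spec.1, hex.choose_spec.2⟩
  have hFA : F.card ≤ A.card := by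
    refine Finset.card_le_card_of_injOn φ (fun x hx => (hφ x hx).1) ?_
    intro x hx y hy he
    by_contra hne
    have h1' := (hφ x hx).2
    rw [he] at h1'
    have h2' := (hφ y hy).2
    exact hFmax.1.2 x hx y hy
      (attacks_of_maxInterval (hAmax (φ y) (hφ y hy).1) h1' h2' hne)
  omega

lemma pure_to_super {P : Finset Cell} {d : ℕ} (hd : 1 ≤ d)
    (Hpure : ∀ F, IsMaxRookSet P F → F.card = d) :
    ∃ A, IsSuperPartition P A ∧ A.card = d := by
  classical
  obtain ⟨F₀, -, hF₀⟩ := exists_maxRook_extend (empty_rook (P := P))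
  have hF₀P : F₀ ⊆ P := hF₀.1.1
  have hcard₀ : F₀.card = d := Hpure F₀ hF₀
  set σ : Cell → Finset Cell := fun g => if ForcedF P F₀ g then Vint P g else Hint P g with hσ
  have hgσ : ∀ g ∈ F₀, g ∈ σ g := by
    intro g hg
    have hgP := hF₀P hg
    simp only [hσ]
    split_ifs
    · exact mem_Vint_self hgP
    · exact mem_Hint_self hgP
  have hσmax : ∀ g ∈ F₀, IsMaxInterval P (σ g) := by
    intro g hg
    have hgP := hF₀P hg
    simp only [hσ]
    split_ifs
    · exact Or.inr (Vint_isMax hgP)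
    · exact Or.inl (Hint_isMax hgP)
  have hcases : ∀ g ∈ F₀, ∀ g' ∈ F₀, g ≠ g' → ∀ x, x ∈ σ g → x ∈ σ g' → False := by
    intro g hg g' hg' hne x hx hx'
    have hgP := hF₀P hg
    have hg'P := hF₀P hg'
    simp only [hσ] at hx hx'
    by_cases h1 : ForcedF P F₀ g
    · rw [if_pos h1] at hx
      by_cases h2 : ForcedF P F₀ g'
      · rw [if_pos h2] at hx'
        have : g' ∈ Vint P g := by
          rw [← Vint_eq_of_mem hgP hx, Vint_eq_of_mem hg'P hx']
          exact mem_Vint_self hg'P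
        exact hne (rook_eq_self_of_mem_Vint hF₀.1 hg hg' this).symm
      · rw [if_neg h2] at hx'
        exact h2 (forced_step h1 hg' (Or.inr ⟨x, hx, hx'⟩))
    · rw [if_neg h1] at hx
      by_cases h2 : ForcedF P F₀ g'
      · rw [if_pos h2] at hx'
        exact h1 (forced_step h2 hg (Or.inr ⟨x, hx', hx⟩))
      · rw [if_neg h2] at hx'
        have : g' ∈ Hint P g := by
          rw [← Hint_eq_of_mem hgP hx, Hint_eq_of_mem hg'P hx']
          exact mem_Hint_self hg'P
        exact hne (rook_eq_self_of_mem_Hint hF₀.1 hg hg' this).symm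
  set A := F₀.image σ with hA
  have hinjσ : Set.InjOn σ F₀ := by
    intro g hg g' hg' he
    by_contra hne
    exact hcases g hg g' hg' hne g (hgσ g hg) (he ▸ hgσ g hg)
  have hAcard : A.card = d := by
    rw [hA, Finset.card_image_of_injOn hinjσ, hcard₀]
  have hpart : IsPartition P A := by
    refine ⟨?_, ?_, ?_⟩
    · intro I hI
      obtain ⟨g, hg, rfl⟩ := Finset.mem_image.mp hI
      exact hσmax g hg
    · intro I hI J hJ hne
      obtain ⟨g, hg, rfl⟩ := Finset.mem_image.mp hI
      obtain ⟨g', hg', rfl⟩ := Finset.mem_image.mp hJ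
      rw [Finset.disjoint_left]
      intro x hx hx'
      exact hcases g hg g' hg' (fun h => hne (h ▸ rfl)) x hx hx'
    · apply Finset.Subset.antisymm
      · intro c hc
        obtain ⟨I, hI, hcI⟩ := Finset.mem_biUnion.mp hc
        obtain ⟨g, hg, rfl⟩ := Finset.mem_image.mp hI
        exact (maxInterval_nonempty (hσmax g hg)).2 hcI
      · intro c hcP
        rw [Finset.mem_biUnion]
        by_cases hcF : c ∈ F₀
        · exact ⟨σ c, Finset.mem_image_of_mem σ hcF, hgσ c hcF⟩
        by_cases hH : ∃ g ∈ F₀, g ∈ Hint P c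
        · obtain ⟨g, hg, hgH⟩ := hH
          have hgP := hF₀P hg
          have hcHg : c ∈ Hint P g := mem_Hint_symm hcP hgH
          by_cases hgf : ForcedF P F₀ g
          · by_cases hV : ∃ g' ∈ F₀, g' ∈ Vint P c
            · obtain ⟨g', hg', hgV⟩ := hV
              have hg'P := hF₀P hg'
              have hcVg' : c ∈ Vint P g' := mem_Vint_symm hcP hgV
              have hf' : ForcedF P F₀ g' := forced_step hgf hg' (Or.inl ⟨c, hcHg, hcVg'⟩)
              refine ⟨σ g', Finset.mem_image_of_mem σ hg', ?_⟩
              simp only [hσ, if_pos hf']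
              exact hcVg'
            · push_neg at hV
              exact (forced_not_dead Hpure hF₀ hgf ⟨c, hcHg, hV⟩).elim
          · refine ⟨σ g, Finset.mem_image_of_mem σ hg, ?_⟩
            simp only [hσ, if_neg hgf]
            exact hcHg
        · push_neg at hH
          by_cases hV : ∃ g' ∈ F₀, g' ∈ Vint P c
          · obtain ⟨g', hg', hgV⟩ := hV
            have hcVg' : c ∈ Vint P g' := mem_Vint_symm hcP hgV
            have hf' : ForcedF P F₀ g' := forced_root hg' ⟨c, hcVg', hH⟩
            refine ⟨σ g', Finset.mem_image_of_mem σ hg', ?_⟩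
            simp only [hσ, if_pos hf']
            exact hcVg'
          · push_neg at hV
            obtain ⟨g, hg, hatt⟩ := maxRook_attacks hF₀ hcP hcF
            rcases mem_of_attacks (hF₀P hg) hatt with h | h
            · exact absurd (mem_Hint_symm (hF₀P hg) h) (hH g hg)
            · exact absurd (mem_Vint_symm (hF₀P hg) h) (hV g hg)
  refine ⟨A, ⟨hpart, ?_⟩, hAcard⟩
  intro I hI hemb
  obtain ⟨Fs, hFs_rook, hFsI, hFs_att⟩ := hemb
  obtain ⟨G, hFsG, hG⟩ := exists_maxRook_extend hFs_rook
  have hGI : ∀ x ∈ G, x ∉ I := by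
    intro x hxG hxI
    obtain ⟨w, hwFs, hwatt⟩ := hFs_att x hxI
    exact hG.1.2 w (hFsG hwFs) x hxG hwatt
  have hGcard : G.card = d := Hpure G hG
  set φ : Cell → Finset Cell := fun x => if h : ∃ J ∈ A.erase I, x ∈ J then h.choose else ∅
    with hφdef
  have hφ : ∀ x ∈ G, φ x ∈ A.erase I ∧ x ∈ φ x := by
    intro x hxG
    have hxP : x ∈ P := hG.1.1 hxG
    have hex : ∃ J ∈ A.erase I, x ∈ J := by
      have : x ∈ A.biUnion id := by rw [hpart.2.2]; exact hxP
      obtain ⟨J, hJ, hxJ⟩ := Finset.mem_biUnion.mp this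
      have hJI : J ≠ I := fun h => (hGI x hxG) (h ▸ hxJ)
      exact ⟨J, Finset.mem_erase.mpr ⟨hJI, hJ⟩, hxJ⟩
    have : φ x = hex.choose := dif_pos hex
    rw [this]
    exact ⟨hex.choose_spec.1, hex.choose_spec.2⟩
  have hle : G.card ≤ (A.erase I).card := by
    refine Finset.card_le_card_of_injOn φ (fun x hx => (hφ x hx).1) ?_
    intro x hx y hy he
    by_contra hne
    have h1' := (hφ x hx).2
    rw [he] at h1'
    have h2' := (hφ y hy).2
    have hJA : φ y ∈ A := Finset.mem_of_mem_erase (hφ y hy).1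
    exact hG.1.2 x hx y hy (attacks_of_maxInterval (hpart.1 (φ y) hJA) h1' h2' hne)
  have hcarde : (A.erase I).card = d - 1 := by
    rw [Finset.card_erase_of_mem hI, hAcard]
  omega

end RookProof

/-- The rook complex of `P` is pure of dimension `d - 1` iff `P` admits a super
partition of cardinality `d`. -/
theorem statement3 (P : Finset Cell) (hP : IsPolyomino P) (d : ℕ) (hd : 1 ≤ d) :
    (∀ F, IsMaxRookSet P F → F.card = d) ↔
      ∃ A, IsSuperPartition P A ∧ A.card = d := by
  constructor
  · intro h
    exact RookProof.pure_to_super hd h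
  · rintro ⟨A, hA, hAc⟩
    exact RookProof.super_to_pure hA hAc
end
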